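/- arXiv:2302.08279 — 11 statements merged into one kernel-verified Lean document; each statement's English description precedes it below -/
import Mathlib

section
/- Let E and F be subsets of [n] of the same cardinality t, with increasing enumerations ẽ_1 < ... < ẽ_t and f̃_1 < ... < f̃_t. If E ≰ F (i.e., it is not the case that ẽ_i ≤ f̃_i for all i), then there exists an index k with ẽ_k > f̃_k and ẽ_k ∉ F, and there exists an index ℓ with ẽ_ℓ > f̃_ℓ and f̃_ℓ ∉ E. -/
/-- Dominance order on equal-cardinality finite sets of naturals:
the i-th smallest element of `E` is at most the i-th smallest element of `F`. -/
def Dom (E F : Finset ℕ) : Prop :=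
  List.Forall₂ (· ≤ ·) (Finset.sort E (· ≤ ·)) (Finset.sort F (· ≤ ·))

/-- The k-th smallest element of `E` (1-based), with junk value 0 out of range. -/
def nth (E : Finset ℕ) (k : ℕ) : ℕ := (Finset.sort E (· ≤ ·)).getD (k - 1) 0

/-- The (0-based) level of `e` in `E`: its index in the increasing enumeration. -/
def level (e : ℕ) (E : Finset ℕ) : ℕ := List.idxOf e (Finset.sort E (· ≤ ·))

theorem stmt1 (n t : ℕ) (E F : Finset ℕ) (hEs : E ⊆ Finset.Icc 1 n) (hFs : F ⊆ Finset.Icc 1 n)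
    (hEc : E.card = t) (hFc : F.card = t) (h : ¬ Dom E F) :
    (∃ k, 1 ≤ k ∧ k ≤ t ∧ nth E k > nth F k ∧ nth E k ∉ F) ∧
    (∃ l, 1 ≤ l ∧ l ≤ t ∧ nth E l > nth F l ∧ nth F l ∉ E) := by
  classical
  set LE := Finset.sort E (· ≤ ·) with hLEdef
  set LF := Finset.sort F (· ≤ ·) with hLFdef
  have hlE : LE.length = t := by rw [hLEdef, Finset.length_sort, hEc]
  have hlF : LF.length = t := by rw [hLFdef, Finset.length_sort, hFc]
  have hsE : LE.Pairwise (· < ·) := (Finset.sortedLT_sort E).pairwise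
  have hsF : LF.Pairwise (· < ·) := (Finset.sortedLT_sort F).pairwise
  -- indices where E exceeds F
  set S : Finset ℕ := (Finset.range t).filter
    (fun i => LF.getD i 0 < LE.getD i 0) with hSdef
  have hmemS : ∀ i, i ∈ S ↔ i < t ∧ LF.getD i 0 < LE.getD i 0 := by
    intro i; simp [hSdef]
  have hSne : S.Nonempty := by
    rw [Dom, List.forall₂_iff_get] at h
    push_neg at h
    obtain ⟨i, h1, h2, hi⟩ := h (hlE.trans hlF.symm)
    refine ⟨i, (hmemS i).2 ⟨hlE ▸ h1, ?_⟩⟩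
    rw [List.getD_eq_getElem _ _ h1, List.getD_eq_getElem _ _ h2]
    simpa using hi
  -- generic facts
  have getnth : ∀ (i : ℕ) (hi : i < t), nth E (i + 1) = LE[i]'(hlE ▸ hi) ∧
      nth F (i + 1) = LF[i]'(hlF ▸ hi) := by
    intro i hi
    constructor <;> simp only [nth, Nat.add_sub_cancel] <;>
      rw [List.getD_eq_getElem]
  constructor
  · -- take the maximal index
    obtain ⟨k, hkS, hkmax⟩ := S.exists_max_image id hSne
    obtain ⟨hkt, hklt⟩ := (hmemS k).1 hkS
    obtain ⟨gE, gF⟩ := getnth k hkt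
    refine ⟨k + 1, Nat.le_add_left 1 k, hkt, ?_, ?_⟩
    · rw [gE, gF]
      rw [List.getD_eq_getElem _ _ (hlF ▸ hkt), List.getD_eq_getElem _ _ (hlE ▸ hkt)] at hklt
      exact hklt
    · rw [gE]
      intro hmem
      have hmemL : LE[k]'(hlE ▸ hkt) ∈ LF := by
        rw [hLFdef]; rw [Finset.mem_sort]; exact hmem
      obtain ⟨j, hj, hje⟩ := List.mem_iff_getElem.mp hmemL
      have hjt : j < t := hlF ▸ hj
      -- j > k
      have hkj : k < j := by
        by_contra hle
        push_neg at hle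
        have : LF[j]'hj ≤ LF[k]'(hlF ▸ hkt) :=
          (hsF.imp le_of_lt).rel_get_of_le (a := ⟨j, hj⟩) (b := ⟨k, hlF ▸ hkt⟩) hle
        rw [hje] at this
        rw [List.getD_eq_getElem _ _ (hlF ▸ hkt), List.getD_eq_getElem _ _ (hlE ▸ hkt)] at hklt
        exact absurd this (not_le.mpr hklt)
      -- then j ∈ S with j > k, contradiction
      have hjS : j ∈ S := by
        rw [hmemS]
        refine ⟨hjt, ?_⟩
        rw [List.getD_eq_getElem _ _ hj, List.getD_eq_getElem _ _ (hlE ▸ hjt), hje]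
        exact hsE.rel_get_of_lt (a := ⟨k, hlE ▸ hkt⟩) (b := ⟨j, hlE ▸ hjt⟩) hkj
      exact absurd (hkmax j hjS) (not_le.mpr hkj)
  · -- take the minimal index
    obtain ⟨l, hlS, hlmin⟩ := S.exists_min_image id hSne
    obtain ⟨hlt, hllt⟩ := (hmemS l).1 hlS
    obtain ⟨gE, gF⟩ := getnth l hlt
    refine ⟨l + 1, Nat.le_add_left 1 l, hlt, ?_, ?_⟩
    · rw [gE, gF]
      rw [List.getD_eq_getElem _ _ (hlF ▸ hlt), List.getD_eq_getElem _ _ (hlE ▸ hlt)] at hllt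
      exact hllt
    · rw [gF]
      intro hmem
      have hmemL : LF[l]'(hlF ▸ hlt) ∈ LE := by
        rw [hLEdef]; rw [Finset.mem_sort]; exact hmem
      obtain ⟨i, hi, hie⟩ := List.mem_iff_getElem.mp hmemL
      have hit : i < t := hlE ▸ hi
      have hil : i < l := by
        by_contra hle
        push_neg at hle
        have : LE[l]'(hlE ▸ hlt) ≤ LE[i]'hi :=
          (hsE.imp le_of_lt).rel_get_of_le (a := ⟨l, hlE ▸ hlt⟩) (b := ⟨i, hi⟩) hle
        rw [hie] at this
        rw [List.getD_eq_getElem _ _ (hlF ▸ hlt), List.getD_eq_getElem _ _ (hlE ▸ hlt)] at hllt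
        exact absurd this (not_le.mpr hllt)
      have hiS : i ∈ S := by
        rw [hmemS]
        refine ⟨hit, ?_⟩
        rw [List.getD_eq_getElem _ _ hi, List.getD_eq_getElem _ _ (hlF ▸ hit), hie]
        exact hsF.rel_get_of_lt (a := ⟨i, hlF ▸ hit⟩) (b := ⟨l, hlF ▸ hlt⟩) hil
      exact absurd (hlmin i hiS) (not_le.mpr hil)
end

section
/- Let E and F be subsets of [n] of the same cardinality t with E ≤ F, and let j ≤ k be indices in {1,...,t}. Then E \ {ẽ_k} ≤ F \ {f̃_j}, where ẽ_k and f̃_j are the k-th and j-th smallest elements of E and F respectively. In particular, E \ {e} ≤ F \ {e} for any e ∈ E ∩ F. -/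
private lemma key_eraseIdx {a b : List ℕ} (hb : b.Pairwise (· ≤ ·))
    (h : List.Forall₂ (· ≤ ·) a b) {p q : ℕ} (hq : q ≤ p) (hp : p < a.length) :
    List.Forall₂ (· ≤ ·) (a.eraseIdx p) (b.eraseIdx q) := by
  have hlen := h.length_eq
  have hq' : q < b.length := by omega
  have hmono : ∀ i j : ℕ, (hij : i ≤ j) → ∀ hj : j < b.length, b[i]'(by omega) ≤ b[j] := by
    intro i j hij hj
    rcases eq_or_lt_of_le hij with rfl | hij
    · exact le_refl _
    · simpa using hb.rel_get_of_lt (a := ⟨i, by omega⟩) (b := ⟨j, hj⟩) (Fin.mk_lt_mk.mpr hij)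
  have hget : ∀ i : ℕ, ∀ hi : i < a.length, a[i] ≤ b[i]'(by omega) := by
    intro i hi
    simpa using h.get hi (by omega)
  rw [List.forall₂_iff_get]
  refine ⟨by rw [List.length_eraseIdx_of_lt hp, List.length_eraseIdx_of_lt hq', hlen], ?_⟩
  intro i h₁ h₂
  have h₁' : i < a.length - 1 := by rwa [List.length_eraseIdx_of_lt hp] at h₁
  simp only [List.get_eq_getElem]
  rcases Nat.lt_or_ge i p with hip | hip
  · rw [List.getElem_eraseIdx_of_lt _ hip]
    rcases Nat.lt_or_ge i q with hiq | hiq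
    · rw [List.getElem_eraseIdx_of_lt _ hiq]
      exact hget i (by omega)
    · rw [List.getElem_eraseIdx_of_ge _ hiq]
      exact le_trans (hget i (by omega)) (hmono i (i+1) (by omega) (by omega))
  · rw [List.getElem_eraseIdx_of_ge _ hip,
      List.getElem_eraseIdx_of_ge _ (le_trans hq hip)]
    exact hget (i+1) (by omega)

private lemma sort_erase (E : Finset ℕ) (x : ℕ) :
    Finset.sort (E.erase x) (· ≤ ·) = (Finset.sort E (· ≤ ·)).erase x := by
  refine List.Perm.eq_of_pairwise' (Finset.pairwise_sort _ _)
    ((Finset.pairwise_sort E (· ≤ ·)).sublist (List.erase_sublist)) ?_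
  rw [← Multiset.coe_eq_coe, Finset.sort_eq, ← Multiset.coe_erase, Finset.sort_eq,
    Finset.erase_val]

private lemma indexOf_le_indexOf {a b : List ℕ} (hb : b.Pairwise (· < ·))
    (h : List.Forall₂ (· ≤ ·) a b) {e : ℕ} (hea : e ∈ a) (heb : e ∈ b) :
    List.idxOf e b ≤ List.idxOf e a := by
  by_contra hcon
  push_neg at hcon
  have hpl : List.idxOf e a < a.length := List.idxOf_lt_length_iff.2 hea
  have hql : List.idxOf e b < b.length := List.idxOf_lt_length_iff.2 heb
  have hlen := h.length_eq
  have h1 : a[List.idxOf e a]'hpl ≤ b[List.idxOf e a]'(by omega) := by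
    simpa using h.get hpl (by omega)
  have h2 : b[List.idxOf e a]'(by omega) < b[List.idxOf e b]'hql := by
    simpa using hb.rel_get_of_lt (a := ⟨List.idxOf e a, by omega⟩)
      (b := ⟨List.idxOf e b, hql⟩) (Fin.mk_lt_mk.mpr hcon)
  have h3 := lt_of_le_of_lt h1 h2
  rw [List.getElem_idxOf, List.getElem_idxOf] at h3
  omega

theorem stmt2 (n t : ℕ) (E F : Finset ℕ) (hEs : E ⊆ Finset.Icc 1 n) (hFs : F ⊆ Finset.Icc 1 n)
    (hEc : E.card = t) (hFc : F.card = t) (h : Dom E F) :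
    (∀ j k, 1 ≤ j → j ≤ k → k ≤ t → Dom (E.erase (nth E k)) (F.erase (nth F j))) ∧
    (∀ e ∈ E ∩ F, Dom (E.erase e) (F.erase e)) := by
  have hEl : (Finset.sort E (· ≤ ·)).length = t := by rw [Finset.length_sort, hEc]
  have hFl : (Finset.sort F (· ≤ ·)).length = t := by rw [Finset.length_sort, hFc]
  have main : ∀ p q : ℕ, ∀ (hpt : p < (Finset.sort E (· ≤ ·)).length)
      (hqt : q < (Finset.sort F (· ≤ ·)).length), q ≤ p →
      Dom (E.erase ((Finset.sort E (· ≤ ·))[p]))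
        (F.erase ((Finset.sort F (· ≤ ·))[q])) := by
    intro p q hpt hqt hqp
    unfold Dom
    rw [sort_erase, sort_erase,
      (Finset.sort_nodup E (· ≤ ·)).erase_getElem p (by omega),
      (Finset.sort_nodup F (· ≤ ·)).erase_getElem q (by omega)]
    exact key_eraseIdx (Finset.pairwise_sort _ _) h hqp (by omega)
  constructor
  · intro j k hj hjk hkt
    have hk1 : k - 1 < t := by omega
    have hj1 : j - 1 < t := by omega
    have h1 : nth E k = (Finset.sort E (· ≤ ·))[k-1]'(by omega) := by
      unfold nth; rw [List.getD_eq_getElem _ _ (by omega)]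
    have h2 : nth F j = (Finset.sort F (· ≤ ·))[j-1]'(by omega) := by
      unfold nth; rw [List.getD_eq_getElem _ _ (by omega)]
    rw [h1, h2]
    exact main (k-1) (j-1) (by omega) (by omega) (by omega)
  · intro e he
    rw [Finset.mem_inter] at he
    have heE : e ∈ Finset.sort E (· ≤ ·) := (Finset.mem_sort _).2 he.1
    have heF : e ∈ Finset.sort F (· ≤ ·) := (Finset.mem_sort _).2 he.2
    have hpl : List.idxOf e (Finset.sort E (· ≤ ·)) < (Finset.sort E (· ≤ ·)).length :=
      List.idxOf_lt_length_iff.2 heE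
    have hql : List.idxOf e (Finset.sort F (· ≤ ·)) < (Finset.sort F (· ≤ ·)).length :=
      List.idxOf_lt_length_iff.2 heF
    have hqp := indexOf_le_indexOf (Finset.sortedLT_sort F).pairwise h heE heF
    have := main _ _ hpl hql hqp
    rwa [List.getElem_idxOf, List.getElem_idxOf] at this
end

section
/- Let E and F be subsets of [n] of the same cardinality with E ≤ F. Let g ≤ h be elements of [n] with g ∉ E and h ∉ F. Then E ∪ {g} ≤ F ∪ {h}. -/
private theorem forall₂_trans' : ∀ {l₁ l₂ l₃ : List ℕ},
    List.Forall₂ (· ≤ ·) l₁ l₂ → List.Forall₂ (· ≤ ·) l₂ l₃ →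
    List.Forall₂ (· ≤ ·) l₁ l₃ := by
  intro l₁ l₂ l₃ h
  induction h generalizing l₃ with
  | nil => intro h2; cases h2; exact List.Forall₂.nil
  | cons hxy htail ih =>
    intro h2
    cases h2 with
    | cons hyz h2t => exact List.Forall₂.cons (le_trans hxy hyz) (ih h2t)

private theorem lemA (b c : ℕ) : ∀ (l : List ℕ), c ≤ b → (c :: l).Pairwise (· ≤ ·) →
    List.Forall₂ (· ≤ ·) (c :: l) (List.orderedInsert (· ≤ ·) b l) := by
  intro l
  induction l generalizing c with
  | nil => intro h _; exact List.Forall₂.cons h List.Forall₂.nil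
  | cons d l ih =>
    intro h hs
    have hcd : c ≤ d := (List.pairwise_cons.1 hs).1 d (by simp)
    have hdl : (d :: l).Pairwise (· ≤ ·) := (List.pairwise_cons.1 hs).2
    simp only [List.orderedInsert]
    split_ifs with h1
    · exact List.Forall₂.cons h (List.Forall₂.cons (le_refl d)
        (List.forall₂_same.2 fun x _ => le_refl x))
    · exact List.Forall₂.cons hcd (ih d (le_of_not_ge h1) hdl)

private theorem lemC : ∀ {l l' : List ℕ} (a y : ℕ),
    List.Forall₂ (· ≤ ·) l l' → a ≤ y → (y :: l').Pairwise (· ≤ ·) →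
    List.Forall₂ (· ≤ ·) (List.orderedInsert (· ≤ ·) a l) (y :: l') := by
  intro l l' a y h
  induction h generalizing a y with
  | nil => intro hay _; exact List.Forall₂.cons hay List.Forall₂.nil
  | @cons x y' l l'' hxy htail ih =>
    intro hay hs
    have hyy' : y ≤ y' := (List.pairwise_cons.1 hs).1 y' (by simp)
    have hs' : (y' :: l'').Pairwise (· ≤ ·) := (List.pairwise_cons.1 hs).2
    simp only [List.orderedInsert]
    split_ifs with h1
    · exact List.Forall₂.cons hay (List.Forall₂.cons hxy htail)
    · have hxa : x ≤ a := le_of_not_ge h1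
      exact List.Forall₂.cons (le_trans hxa hay) (ih a y' (le_trans hay hyy') hs')

private theorem lemB (a b : ℕ) (hab : a ≤ b) : ∀ {l₁ l₂ : List ℕ},
    List.Forall₂ (· ≤ ·) l₁ l₂ → l₁.Pairwise (· ≤ ·) → l₂.Pairwise (· ≤ ·) →
    List.Forall₂ (· ≤ ·) (List.orderedInsert (· ≤ ·) a l₁)
      (List.orderedInsert (· ≤ ·) b l₂) := by
  intro l₁ l₂ h
  induction h with
  | nil => intro _ _; exact List.Forall₂.cons hab List.Forall₂.nil
  | @cons x y l l' hxy htail ih =>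
    intro hs₁ hs₂
    have hs₁' : l.Pairwise (· ≤ ·) := (List.pairwise_cons.1 hs₁).2
    have hs₂' : l'.Pairwise (· ≤ ·) := (List.pairwise_cons.1 hs₂).2
    simp only [List.orderedInsert]
    split_ifs with h1 h2 h2
    · exact List.Forall₂.cons hab (List.Forall₂.cons hxy htail)
    · -- a ≤ x, y < b
      refine List.Forall₂.cons (le_trans h1 hxy) ?_
      exact forall₂_trans' (List.Forall₂.cons hxy htail)
        (lemA b y l' (le_of_not_ge h2) hs₂)
    · -- x < a, b ≤ y
      refine List.Forall₂.cons (le_trans (le_of_not_ge h1) hab) ?_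
      exact lemC a y htail (le_trans hab h2) hs₂
    · exact List.Forall₂.cons hxy (ih hs₁' hs₂')

private theorem sort_insert' (g : ℕ) (E : Finset ℕ) (hg : g ∉ E) :
    Finset.sort (insert g E) (· ≤ ·) = List.orderedInsert (· ≤ ·) g (Finset.sort E (· ≤ ·)) := by
  refine List.Perm.eq_of_pairwise' (Finset.pairwise_sort _ _)
    ((Finset.pairwise_sort E (· ≤ ·)).orderedInsert g _) ?_
  exact ((Finset.sort_perm_toList _ _).trans ((Finset.toList_insert hg).trans
    ((List.Perm.cons g (Finset.sort_perm_toList _ _).symm).trans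
      (List.perm_orderedInsert _ _ _).symm)))

theorem stmt4 (n : ℕ) (E F : Finset ℕ) (hEs : E ⊆ Finset.Icc 1 n) (hFs : F ⊆ Finset.Icc 1 n)
    (hc : E.card = F.card) (h : Dom E F) (g hh : ℕ)
    (hg : g ∈ Finset.Icc 1 n) (hhn : hh ∈ Finset.Icc 1 n) (hgh : g ≤ hh)
    (hgE : g ∉ E) (hhF : hh ∉ F) :
    Dom (insert g E) (insert hh F) := by
  unfold Dom at *
  rw [sort_insert' g E hgE, sort_insert' hh F hhF]
  exact lemB g hh hgh h (Finset.pairwise_sort _ _) (Finset.pairwise_sort _ _)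
end

section
/- Let E and F be subsets of [n] of the same cardinality with E ≤ F. Let g ≥ h be elements of [n] with g ∉ E and h ∉ F, and assume E' := E ∪ {g} ≤ F ∪ {h} =: F'. If an element e ∈ E ∩ F occurs at the same level (i.e., has the same rank in the increasing enumeration) in E and in F, then e occurs at the same level in E' and in F'. -/
lemma idx_count {l : List ℕ} (hl : l.Pairwise (· < ·)) {e : ℕ} (he : e ∈ l) :
    l.idxOf e = l.countP (· < e) := by
  induction l with
  | nil => simp at he
  | cons a t ih =>
    obtain ⟨h1, h2⟩ := List.pairwise_cons.1 hl
    rcases List.mem_cons.1 he with rfl | hmem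
    · simp only [List.idxOf_cons_self, List.countP_cons]
      have : List.countP (fun x => decide (x < e)) t = 0 :=
        List.countP_eq_zero.2 (fun x hx => by simpa using not_lt.2 (le_of_lt (h1 x hx)))
      simp [this]
    · have hae : a < e := h1 e hmem
      have hne : a ≠ e := fun h => by omega
      rw [List.idxOf_cons_ne _ hne, List.countP_cons]
      simp only [decide_eq_true_eq, hae, if_true]
      rw [ih h2 hmem]

lemma level_eq {e : ℕ} {E : Finset ℕ} (he : e ∈ E) :
    level e E = (E.filter (· < e)).card := by
  rw [level, idx_count (Finset.sortedLT_sort E).pairwise (by simpa using he),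
    (Finset.sort_perm_toList E (· ≤ ·)).countP_eq,
    ← Multiset.coe_countP, Finset.coe_toList, Multiset.countP_eq_card_filter]
  rw [Finset.card_filter]
  simp [Finset.filter]

lemma level_insert {e x : ℕ} {E : Finset ℕ} (he : e ∈ E) (hx : x ∉ E) :
    level e (insert x E) = level e E + (if x < e then 1 else 0) := by
  rw [level_eq he, level_eq (Finset.mem_insert_of_mem he), Finset.filter_insert]
  split
  · rw [Finset.card_insert_of_notMem (fun hm => hx (Finset.mem_filter.1 hm).1)]
  · simp

example : True := trivial

theorem stmt5 (n : ℕ) (E F : Finset ℕ) (hEs : E ⊆ Finset.Icc 1 n) (hFs : F ⊆ Finset.Icc 1 n)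
    (hc : E.card = F.card) (h : Dom E F) (g hh : ℕ)
    (hg : g ∈ Finset.Icc 1 n) (hhn : hh ∈ Finset.Icc 1 n) (hgh : hh ≤ g)
    (hgE : g ∉ E) (hhF : hh ∉ F)
    (h' : Dom (insert g E) (insert hh F))
    (e : ℕ) (heE : e ∈ E) (heF : e ∈ F) (hlev : level e E = level e F) :
    level e (insert g E) = level e (insert hh F) := by
  have hge : g ≠ e := fun h => hgE (h ▸ heE)
  have hhe : hh ≠ e := fun h => hhF (h ▸ heF)
  rw [level_insert heE hgE, level_insert heF hhF, hlev]
  rcases lt_or_gt_of_ne hge with hlt | hgt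
  · simp [hlt, lt_of_le_of_lt hgh hlt]
  · -- g > e; claim hh > e
    have hhh : ¬ hh < e := by
      intro hhlt
      exfalso
      set l₁ := Finset.sort (insert g E) (· ≤ ·) with hl₁
      set l₂ := Finset.sort (insert hh F) (· ≤ ·) with hl₂
      have hk₁ : level e (insert g E) = level e F := by
        rw [level_insert heE hgE, hlev]; simp [not_lt.2 (le_of_lt hgt)]
      have hk₂ : level e (insert hh F) = level e F + 1 := by
        rw [level_insert heF hhF, ]; simp [hhlt]
      set k := level e F with hk
      have he₁ : e ∈ l₁ := by simp [hl₁, Finset.mem_insert_of_mem heE]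
      have he₂ : e ∈ l₂ := by simp [hl₂, Finset.mem_insert_of_mem heF]
      have hi₁ : l₁.idxOf e = k := hk₁
      have hi₂ : l₂.idxOf e = k + 1 := hk₂
      have hlen₁ : k < l₁.length := hi₁ ▸ List.idxOf_lt_length_iff.2 he₁
      have hlen₂ : k + 1 < l₂.length := hi₂ ▸ List.idxOf_lt_length_iff.2 he₂
      have hlen₂' : k < l₂.length := Nat.lt_of_succ_lt hlen₂
      obtain ⟨_, hget⟩ := List.forall₂_iff_get.1 h'
      have h1 : l₁.get ⟨k, hlen₁⟩ ≤ l₂.get ⟨k, hlen₂'⟩ := hget k hlen₁ hlen₂'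
      have h2 : l₁.get ⟨k, hlen₁⟩ = e := by
        have := List.idxOf_get (a := e) (l := l₁) (hi₁ ▸ hlen₁)
        simpa [hi₁] using this
      have h3 : l₂.get ⟨k, hlen₂'⟩ < e := by
        have h4 : l₂.get ⟨k + 1, hlen₂⟩ = e := by
          have := List.idxOf_get (a := e) (l := l₂) (hi₂ ▸ hlen₂)
          simpa [hi₂] using this
        have := (Finset.sortedLT_sort (insert hh F)).strictMono_get
          (show (⟨k, hlen₂'⟩ : Fin l₂.length) < ⟨k + 1, hlen₂⟩ from by simp)
        rw [← h4]; exact this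
      omega
    have : e < hh := lt_of_le_of_ne (not_lt.1 hhh) (Ne.symm hhe)
    simp [not_lt.2 (le_of_lt hgt), not_lt.2 (le_of_lt this)]
end

section
/- Let A and B be subsets of [n] of common cardinality t with B ≤ A, and let γ ∈ [n] \ A. Set A' := A ∪ {γ}. Let q be the least index in {1,...,t+1} such that b̃_q > ã'_q (with b̃_{t+1} = ∞), and set α' := ã'_q. Then α' ∉ B, γ ≤ α', B ∪ {α'} ≤ A', and α' has the same level in A' and in B ∪ {α'}. -/
namespace StmtAux

lemma card_filter_eq_countP (E : Finset ℕ) (p : ℕ → Prop) [DecidablePred p] :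
    (E.filter p).card = (Finset.sort E (· ≤ ·)).countP (fun x => decide (p x)) := by
  rw [← Multiset.coe_countP, Finset.sort_eq, Multiset.countP_eq_card_filter]; rfl

variable {E : Finset ℕ} {k m : ℕ}

lemma nth_eq_get (hk1 : 1 ≤ k) (hk2 : k ≤ E.card) :
    nth E k = (Finset.sort E (· ≤ ·)).get
      ⟨k - 1, by rw [Finset.length_sort]; omega⟩ := by
  have h : k - 1 < (Finset.sort E (· ≤ ·)).length := by rw [Finset.length_sort]; omega
  rw [nth, List.getD_eq_getElem _ _ h, List.get_eq_getElem]

lemma nth_mem (hk1 : 1 ≤ k) (hk2 : k ≤ E.card) : nth E k ∈ E := by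
  rw [nth_eq_get hk1 hk2]
  exact (Finset.mem_sort _).1 (List.get_mem _ _)

lemma nth_lt_nth {j : ℕ} (hj : 1 ≤ j) (hjk : j < k) (hk : k ≤ E.card) :
    nth E j < nth E k := by
  rw [nth_eq_get hj (le_of_lt (lt_of_lt_of_le hjk hk)), nth_eq_get (by omega) hk]
  exact (Finset.sortedLT_sort E).strictMono_get (by simp only [Fin.mk_lt_mk]; omega)

lemma nth_le_nth {j : ℕ} (hj : 1 ≤ j) (hjk : j ≤ k) (hk : k ≤ E.card) :
    nth E j ≤ nth E k := by
  rcases eq_or_lt_of_le hjk with rfl | h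
  · exact le_rfl
  · exact (nth_lt_nth hj h hk).le

lemma nth_le_iff (hk1 : 1 ≤ k) (hk2 : k ≤ E.card) :
    nth E k ≤ m ↔ k ≤ (E.filter (· ≤ m)).card := by
  classical
  set L := Finset.sort E (· ≤ ·) with hL
  have hlen : L.length = E.card := Finset.length_sort _
  have hks : k - 1 < L.length := by omega
  have hsort : L.Pairwise (· < ·) := (Finset.sortedLT_sort E).pairwise
  have hpw := List.pairwise_iff_getElem.1 hsort
  have hnth : nth E k = L[k - 1] := by rw [nth_eq_get hk1 hk2]; rfl
  rw [card_filter_eq_countP]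
  have hsplit : ∀ j, L.countP (fun x => decide (x ≤ m)) =
      (L.take j).countP (fun x => decide (x ≤ m)) +
      (L.drop j).countP (fun x => decide (x ≤ m)) := by
    intro j
    conv_lhs => rw [← List.take_append_drop j L]
    rw [List.countP_append]
  constructor
  · intro h
    have htk : (L.take k).countP (fun x => decide (x ≤ m)) = k := by
      rw [List.countP_eq_length.2, List.length_take]
      · omega
      · intro a ha
        obtain ⟨i, hi, rfl⟩ := List.mem_iff_getElem.1 ha
        have hi' : i < k := by
          have := hi; rw [List.length_take] at this; omega
        have hiL : i < L.length := by
          have := hi; rw [List.length_take] at this; omega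
        rw [List.getElem_take]
        simp only [decide_eq_true_iff]
        rcases eq_or_lt_of_le (show i ≤ k - 1 by omega) with heq | hlt
        · subst heq; omega
        · exact le_trans (hpw i (k-1) hiL hks hlt).le (hnth ▸ h)
    rw [hsplit k]; omega
  · intro h
    by_contra hcon
    push_neg at hcon
    have hdr : (L.drop (k - 1)).countP (fun x => decide (x ≤ m)) = 0 := by
      rw [List.countP_eq_zero]
      intro a ha
      obtain ⟨i, hi, rfl⟩ := List.mem_iff_getElem.1 ha
      rw [List.getElem_drop]
      simp only [decide_eq_true_iff, not_le]
      rcases Nat.eq_zero_or_pos i with rfl | hpos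
      · simpa using hnth ▸ hcon
      · have hlt : k - 1 < k - 1 + i := by omega
        have hb : k - 1 + i < L.length := by
          have := hi; rw [List.length_drop] at this; omega
        exact lt_trans (hnth ▸ hcon) (hpw (k-1) (k-1+i) hks hb hlt)
    have htk : (L.take (k - 1)).countP (fun x => decide (x ≤ m)) ≤ k - 1 :=
      le_trans (List.countP_le_length (p := fun x => decide (x ≤ m))) (by rw [List.length_take]; omega)
    rw [hsplit (k - 1)] at h
    omega

lemma filter_nth_card (hk1 : 1 ≤ k) (hk2 : k ≤ E.card) :
    (E.filter (· ≤ nth E k)).card = k := by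
  have h1 : k ≤ (E.filter (· ≤ nth E k)).card := (nth_le_iff hk1 hk2).1 le_rfl
  by_contra hcon
  have h2 : k + 1 ≤ (E.filter (· ≤ nth E k)).card := by omega
  have h3 : k + 1 ≤ E.card :=
    le_trans h2 (Finset.card_le_card (Finset.filter_subset _ _))
  have h4 : nth E (k + 1) ≤ nth E k := (nth_le_iff (by omega) h3).2 h2
  have h5 := nth_lt_nth hk1 (show k < k + 1 by omega) h3
  omega

lemma nth_eq_of_mem {e : ℕ} (he : e ∈ E) (hc : (E.filter (· ≤ e)).card = k) :
    nth E k = e := by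
  have he' : e ∈ E.filter (· ≤ e) := Finset.mem_filter.2 ⟨he, le_rfl⟩
  have hk1 : 1 ≤ k := by rw [← hc]; exact Finset.card_pos.2 ⟨e, he'⟩
  have hk2 : k ≤ E.card := by
    rw [← hc]; exact Finset.card_le_card (Finset.filter_subset _ _)
  have h1 : nth E k ≤ e := (nth_le_iff hk1 hk2).2 hc.ge
  rcases eq_or_lt_of_le h1 with heq | hlt
  · exact heq
  · exfalso
    have hss : E.filter (· ≤ nth E k) ⊂ E.filter (· ≤ e) := by
      refine ⟨fun x hx => ?_, fun hsub => ?_⟩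
      · rw [Finset.mem_filter] at hx ⊢
        exact ⟨hx.1, le_trans hx.2 h1⟩
      have := hsub he'
      rw [Finset.mem_filter] at this
      omega
    have := Finset.card_lt_card hss
    rw [filter_nth_card hk1 hk2, hc] at this
    omega

lemma level_nth (hk1 : 1 ≤ k) (hk2 : k ≤ E.card) : level (nth E k) E = k - 1 := by
  rw [level, nth_eq_get hk1 hk2, List.get_idxOf (Finset.sort_nodup _ _)]

lemma dom_iff {E F : Finset ℕ} (h : E.card = F.card) :
    Dom E F ↔ ∀ k, 1 ≤ k → k ≤ E.card → nth E k ≤ nth F k := by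
  rw [Dom, List.forall₂_iff_get]
  constructor
  · rintro ⟨hl, hp⟩ k hk1 hk2
    rw [nth_eq_get hk1 hk2, nth_eq_get hk1 (h ▸ hk2)]
    exact hp (k - 1) _ _
  · intro hp
    refine ⟨by rw [Finset.length_sort, Finset.length_sort, h], fun i h₁ h₂ => ?_⟩
    have hic : i < E.card := by rwa [Finset.length_sort] at h₁
    have := hp (i + 1) (by omega) (by omega)
    rw [nth_eq_get (by omega) (by omega), nth_eq_get (by omega) (by omega)] at this
    simpa using this

end StmtAux

open StmtAux in
theorem stmt6 (n t : ℕ) (A B : Finset ℕ) (hAs : A ⊆ Finset.Icc 1 n) (hBs : B ⊆ Finset.Icc 1 n)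
    (hAc : A.card = t) (hBc : B.card = t) (hdom : Dom B A)
    (γ : ℕ) (hγ : γ ∈ Finset.Icc 1 n) (hγA : γ ∉ A)
    (q : ℕ) (hq1 : 1 ≤ q) (hq2 : q ≤ t + 1)
    -- q satisfies the defining property (with the convention b̃_{t+1} = ∞, the case q = t+1
    -- holds vacuously):
    (hqP : q ≤ t → nth B q > nth (insert γ A) q)
    -- q is least with this property:
    (hqmin : ∀ r, 1 ≤ r → r < q → nth B r ≤ nth (insert γ A) r) :
    nth (insert γ A) q ∉ B ∧
    γ ≤ nth (insert γ A) q ∧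
    Dom (insert (nth (insert γ A) q) B) (insert γ A) ∧
    level (nth (insert γ A) q) (insert γ A) =
      level (nth (insert γ A) q) (insert (nth (insert γ A) q) B) := by
  classical
  set A' : Finset ℕ := insert γ A with hA'
  set α : ℕ := nth A' q with hα
  have hA'c : A'.card = t + 1 := by rw [hA', Finset.card_insert_of_notMem hγA, hAc]
  have hq2' : q ≤ A'.card := by omega
  have hdomBA : ∀ k, 1 ≤ k → k ≤ t → nth B k ≤ nth A k :=
    fun k h1 h2 => (dom_iff (hBc.trans hAc.symm)).1 hdom k h1 (by omega)
  -- cardinality of small elements of B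
  have hBfilt : (B.filter (· ≤ α)).card = q - 1 := by
    have hge : q - 1 ≤ (B.filter (· ≤ α)).card := by
      rcases eq_or_lt_of_le hq1 with heq | hgt
      · omega
      · have h1 : nth B (q - 1) ≤ nth A' (q - 1) := hqmin (q - 1) (by omega) (by omega)
        have h2 : nth A' (q - 1) ≤ α := nth_le_nth (by omega) (by omega) hq2'
        exact (nth_le_iff (by omega) (by omega)).1 (le_trans h1 h2)
    have hle : (B.filter (· ≤ α)).card ≤ q - 1 := by
      rcases le_or_gt q t with hqt | hqt
      · have h1 := hqP hqt
        have h2 : ¬ nth B q ≤ α := by omega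
        rw [nth_le_iff hq1 (by omega)] at h2
        omega
      · calc (B.filter (· ≤ α)).card ≤ B.card :=
              Finset.card_le_card (Finset.filter_subset _ _)
          _ ≤ q - 1 := by omega
    omega
  -- Claim 1 : α ∉ B
  have claim1 : α ∉ B := by
    intro hαB
    have hmem : α ∈ B.filter (· ≤ α) := Finset.mem_filter.2 ⟨hαB, le_rfl⟩
    have hq1' : 1 ≤ q - 1 := by
      by_contra h
      have : q = 1 := by omega
      rw [this] at hBfilt
      simp only [Nat.sub_self] at hBfilt
      rw [Finset.card_eq_zero] at hBfilt
      rw [hBfilt] at hmem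
      exact absurd hmem (Finset.notMem_empty _)
    have h1 : nth B (q - 1) = α := nth_eq_of_mem hαB hBfilt
    have h2 : nth B (q - 1) ≤ nth A' (q - 1) := hqmin (q - 1) hq1' (by omega)
    have h3 : nth A' (q - 1) < nth A' q := nth_lt_nth hq1' (by omega) hq2'
    omega
  -- Claim 2 : γ ≤ α
  have claim2 : γ ≤ α := by
    by_contra h
    push_neg at h
    have hAf : A'.filter (· ≤ α) = A.filter (· ≤ α) := by
      rw [hA', Finset.filter_insert, if_neg (by omega)]
    have hcard : (A.filter (· ≤ α)).card = q := by
      rw [← hAf]; exact filter_nth_card hq1 hq2'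
    have hq_le_t : q ≤ t := by
      have := Finset.card_le_card (Finset.filter_subset (· ≤ α) A)
      omega
    have h1 : nth A q ≤ α := (nth_le_iff hq1 (by omega)).2 hcard.ge
    have h2 := hdomBA q hq1 hq_le_t
    have h3 := hqP hq_le_t
    omega
  -- the new set B'
  set B' : Finset ℕ := insert α B with hB'
  have hB'c : B'.card = t + 1 := by rw [hB', Finset.card_insert_of_notMem claim1, hBc]
  have hB'f : (B'.filter (· ≤ α)).card = q := by
    rw [hB', Finset.filter_insert, if_pos le_rfl,
      Finset.card_insert_of_notMem (fun hc => claim1 (Finset.mem_filter.1 hc).1), hBfilt]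
    omega
  have hnthB' : nth B' q = α := nth_eq_of_mem (Finset.mem_insert_self _ _) hB'f
  -- Claim 3 : Dom B' A'
  have claim3 : Dom B' A' := by
    rw [dom_iff (by omega)]
    intro j hj1 hj2
    rw [hB'c] at hj2
    rw [nth_le_iff hj1 (by omega)]
    set m : ℕ := nth A' j with hm
    rcases lt_trichotomy j q with hlt | heq | hgt
    · have hjt : j ≤ t := by omega
      have h1 : nth B j ≤ m := hqmin j hj1 hlt
      have h2 : j ≤ (B.filter (· ≤ m)).card := (nth_le_iff hj1 (by omega)).1 h1
      calc j ≤ (B.filter (· ≤ m)).card := h2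
        _ ≤ (B'.filter (· ≤ m)).card := Finset.card_le_card
            (fun x hx => by
              rw [Finset.mem_filter] at hx ⊢
              exact ⟨Finset.mem_insert_of_mem hx.1, hx.2⟩)
    · subst heq
      rw [← hα] at hm
      rw [hm]
      omega
    · -- q < j
      have hαm : α ≤ m := nth_le_nth hq1 (by omega) (by omega)
      have hA'filt : (A'.filter (· ≤ m)).card = j := filter_nth_card hj1 (by omega)
      have hAfilt : j - 1 ≤ (A.filter (· ≤ m)).card := by
        have hsub : A'.filter (· ≤ m) ⊆ insert γ (A.filter (· ≤ m)) := by
          intro x hx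
          rw [Finset.mem_filter] at hx
          rcases Finset.mem_insert.1 hx.1 with rfl | hxA
          · exact Finset.mem_insert_self _ _
          · exact Finset.mem_insert_of_mem (Finset.mem_filter.2 ⟨hxA, hx.2⟩)
        have := Finset.card_le_card hsub
        have := Finset.card_insert_le γ (A.filter (· ≤ m))
        omega
      have h1 : nth A (j - 1) ≤ m := (nth_le_iff (by omega) (by omega)).2 hAfilt
      have h2 : nth B (j - 1) ≤ nth A (j - 1) := hdomBA (j - 1) (by omega) (by omega)
      have h3 : j - 1 ≤ (B.filter (· ≤ m)).card :=
        (nth_le_iff (by omega) (by omega)).1 (le_trans h2 h1)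
      have h4 : B'.filter (· ≤ m) = insert α (B.filter (· ≤ m)) := by
        rw [hB', Finset.filter_insert, if_pos hαm]
      have h5 : α ∉ B.filter (· ≤ m) := fun hc => claim1 (Finset.mem_filter.1 hc).1
      rw [h4, Finset.card_insert_of_notMem h5]
      omega
  -- Claim 4 : levels agree
  have claim4 : level α A' = level α B' := by
    have h1 : level α A' = q - 1 := level_nth hq1 hq2'
    have h2 : level α B' = q - 1 := by
      rw [← hnthB']
      exact level_nth hq1 (by omega)
    rw [h1, h2]
  exact ⟨claim1, claim2, claim3, claim4⟩
end

section
/- In the setting of the maximal-lift subroutine (B ≤ A, γ ∉ A, A' = A ∪ {γ}, α' defined as the q-th smallest element of A' where q is least with b̃_q > ã'_q): suppose an element α is at the same level j in both A and B (i.e., ã_j = α = b̃_j), and γ < α. Then α' < α, and α is at level j+1 in both A' = A ∪ {γ} and B' = B ∪ {α'}. -/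
private lemma sorted_countP_getD (l : List ℕ) (hl : l.Pairwise (· < ·)) :
    ∀ i, i < l.length → l.countP (fun x => x < l.getD i 0) = i := by
  induction l with
  | nil => intro i hi; simp at hi
  | cons a tl ih =>
    intro i hi
    rcases List.pairwise_cons.mp hl with ⟨ha, htl⟩
    cases i with
    | zero =>
      simp only [List.getD_cons_zero, List.countP_cons]
      have h1 : tl.countP (fun x => decide (x < a)) = 0 := by
        rw [List.countP_eq_zero]
        intro x hx
        simp only [decide_eq_true_eq]
        exact not_lt.mpr (le_of_lt (ha x hx))
      simp [h1]
    | succ i =>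
      simp only [List.getD_cons_succ, List.countP_cons]
      have hi' : i < tl.length := by simpa using hi
      have hmem : tl.getD i 0 ∈ tl := by
        rw [List.getD_eq_getElem _ _ hi']; exact List.getElem_mem _
      have hpa : a < tl.getD i 0 := ha _ hmem
      rw [ih htl i hi', if_pos (by simpa using hpa)]

private lemma sorted_getD_countP (l : List ℕ) (hl : l.Pairwise (· < ·)) :
    ∀ e, e ∈ l → l.getD (l.countP (fun x => x < e)) 0 = e := by
  induction l with
  | nil => intro e he; simp at he
  | cons a tl ih =>
    intro e he
    rcases List.pairwise_cons.mp hl with ⟨ha, htl⟩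
    rcases List.mem_cons.mp he with rfl | hmem
    · have h1 : tl.countP (fun x => decide (x < e)) = 0 := by
        rw [List.countP_eq_zero]
        intro x hx
        simp only [decide_eq_true_eq]
        exact not_lt.mpr (le_of_lt (ha x hx))
      simp [List.countP_cons, h1]
    · have hae : a < e := ha e hmem
      simp only [List.countP_cons]
      rw [if_pos (by simpa using hae)]
      simpa using ih htl e hmem

private lemma countP_sort (E : Finset ℕ) (e : ℕ) :
    (Finset.sort E (· ≤ ·)).countP (fun x => x < e) = (E.filter (· < e)).card := by
  classical
  have h1 : ((Finset.sort E (· ≤ ·) : List ℕ) : Multiset ℕ) = E.val := Finset.sort_eq _ _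
  have h2 : Multiset.countP (fun x => x < e) ((Finset.sort E (· ≤ ·) : List ℕ) : Multiset ℕ)
      = (Finset.sort E (· ≤ ·)).countP (fun x => x < e) := Multiset.coe_countP _ _
  rw [← h2, h1, Multiset.countP_eq_card_filter]
  rfl

private lemma nth_mem' (E : Finset ℕ) (k : ℕ) (hk1 : 1 ≤ k) (hk2 : k ≤ E.card) :
    nth E k ∈ E := by
  have h : k - 1 < (Finset.sort E (· ≤ ·)).length := by
    rw [Finset.length_sort]; omega
  rw [← Finset.mem_sort (· ≤ ·), nth, List.getD_eq_getElem _ _ h]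
  exact List.getElem_mem _

private lemma filter_card_nth (E : Finset ℕ) (k : ℕ) (hk1 : 1 ≤ k) (hk2 : k ≤ E.card) :
    (E.filter (· < nth E k)).card = k - 1 := by
  rw [← countP_sort, nth]
  exact sorted_countP_getD _ ((Finset.sortedLT_sort E).pairwise) (k - 1) (by rw [Finset.length_sort]; omega)

private lemma nth_filter_card (E : Finset ℕ) (e : ℕ) (he : e ∈ E) :
    nth E ((E.filter (· < e)).card + 1) = e := by
  rw [nth, Nat.add_sub_cancel, ← countP_sort]
  exact sorted_getD_countP _ ((Finset.sortedLT_sort E).pairwise) e ((Finset.mem_sort _).mpr he)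

private lemma nth_lt_nth' (E : Finset ℕ) {k₁ k₂ : ℕ} (h1 : 1 ≤ k₁) (h : k₁ < k₂)
    (h2 : k₂ ≤ E.card) : nth E k₁ < nth E k₂ := by
  have hl1 : k₁ - 1 < (Finset.sort E (· ≤ ·)).length := by rw [Finset.length_sort]; omega
  have hl2 : k₂ - 1 < (Finset.sort E (· ≤ ·)).length := by rw [Finset.length_sort]; omega
  rw [nth, nth, List.getD_eq_getElem _ _ hl1, List.getD_eq_getElem _ _ hl2]
  have := ((Finset.sortedLT_sort E).pairwise).rel_get_of_lt (a := ⟨k₁ - 1, hl1⟩) (b := ⟨k₂ - 1, hl2⟩)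
    (by simp [Fin.lt_def]; omega)
  simpa using this

private lemma nth_le_nth' (E : Finset ℕ) {k₁ k₂ : ℕ} (h1 : 1 ≤ k₁) (h : k₁ ≤ k₂)
    (h2 : k₂ ≤ E.card) : nth E k₁ ≤ nth E k₂ := by
  rcases eq_or_lt_of_le h with rfl | h'
  · exact le_refl _
  · exact le_of_lt (nth_lt_nth' E h1 h' h2)

theorem stmt7 (n t : ℕ) (A B : Finset ℕ) (hAs : A ⊆ Finset.Icc 1 n) (hBs : B ⊆ Finset.Icc 1 n)
    (hAc : A.card = t) (hBc : B.card = t) (hdom : Dom B A)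
    (γ : ℕ) (hγ : γ ∈ Finset.Icc 1 n) (hγA : γ ∉ A)
    (q : ℕ) (hq1 : 1 ≤ q) (hq2 : q ≤ t + 1)
    (hqP : q ≤ t → nth B q > nth (insert γ A) q)
    (hqmin : ∀ r, 1 ≤ r → r < q → nth B r ≤ nth (insert γ A) r)
    (α j : ℕ) (hj1 : 1 ≤ j) (hj2 : j ≤ t)
    (hαA : nth A j = α) (hαB : nth B j = α) (hγα : γ < α) :
    nth (insert γ A) q < α ∧
    nth (insert γ A) (j + 1) = α ∧
    nth (insert (nth (insert γ A) q) B) (j + 1) = α := by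
  classical
  have hA'c : (insert γ A).card = t + 1 := by
    rw [Finset.card_insert_of_notMem hγA, hAc]
  have hαmemA : α ∈ A := hαA ▸ nth_mem' A j hj1 (by omega)
  have hαmemB : α ∈ B := hαB ▸ nth_mem' B j hj1 (by omega)
  have hcA : (A.filter (· < α)).card = j - 1 := by
    rw [← hαA]; exact filter_card_nth A j hj1 (by omega)
  have hcB : (B.filter (· < α)).card = j - 1 := by
    rw [← hαB]; exact filter_card_nth B j hj1 (by omega)
  have hcA' : ((insert γ A).filter (· < α)).card = j := by
    rw [Finset.filter_insert, if_pos hγα, Finset.card_insert_of_notMem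
      (fun h => hγA (Finset.mem_of_mem_filter _ h)), hcA]
    omega
  have hA'j1 : nth (insert γ A) (j + 1) = α := by
    have := nth_filter_card (insert γ A) α (Finset.mem_insert_of_mem hαmemA)
    rwa [hcA'] at this
  have hA'jlt : nth (insert γ A) j < α := by
    have := nth_lt_nth' (insert γ A) (k₁ := j) (k₂ := j + 1) hj1 (by omega) (by omega)
    rwa [hA'j1] at this
  have hqj : q ≤ j := by
    by_contra h
    push_neg at h
    have h1 := hqmin j hj1 h
    rw [hαB] at h1
    omega
  have hα'lt : nth (insert γ A) q < α := by
    rcases eq_or_lt_of_le hqj with rfl | h'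
    · exact hA'jlt
    · exact lt_of_le_of_lt (nth_le_nth' (insert γ A) hq1 hqj (by omega)) hA'jlt
  set α' := nth (insert γ A) q with hα'def
  have hα'B : α' ∉ B := by
    intro hmem
    set c := (B.filter (· < α')).card with hcdef
    have h1 : nth B (c + 1) = α' := nth_filter_card B α' hmem
    have hcb : c < t := by
      rw [← hBc]
      exact Finset.card_lt_card (Finset.filter_ssubset.mpr ⟨α', hmem, by simp⟩)
    have hBq : nth B q > α' := hqP (by omega)
    have hlt : c + 1 < q := by
      by_contra h
      push_neg at h
      have := nth_le_nth' B hq1 h (by omega)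
      omega
    have h3 := hqmin (c + 1) (by omega) hlt
    have h4 : nth (insert γ A) (c + 1) < α' := nth_lt_nth' (insert γ A) (by omega) hlt (by omega)
    omega
  have hcB' : ((insert α' B).filter (· < α)).card = j := by
    rw [Finset.filter_insert, if_pos hα'lt, Finset.card_insert_of_notMem
      (fun h => hα'B (Finset.mem_of_mem_filter _ h)), hcB]
    omega
  have hB'j1 : nth (insert α' B) (j + 1) = α := by
    have := nth_filter_card (insert α' B) α (Finset.mem_insert_of_mem hαmemB)
    rwa [hcB'] at this
  exact ⟨hα'lt, hA'j1, hB'j1⟩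
end

section
/- In the setting of the maximal-lift subroutine (B ≤ A, γ ∉ A, A' = A ∪ {γ}, B' = B ∪ {α'} with α' the q-th smallest element of A' for q least with b̃_q > ã'_q): any element that is at the same level in A and B is at the same level in A' and B'. -/
lemma aux_sorted_indexOf_eq_countP (l : List ℕ) (hl : l.Pairwise (· < ·)) (a : ℕ) (ha : a ∈ l) :
    l.idxOf a = l.countP (· < a) := by
  induction l with
  | nil => simp at ha
  | cons x xs ih =>
    rw [List.pairwise_cons] at hl
    rcases List.mem_cons.1 ha with rfl | ha'
    · rw [List.idxOf_cons_self, List.countP_cons_of_neg (by simp), Eq.comm,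
        List.countP_eq_zero]
      intro y hy
      have := hl.1 y hy
      simp only [decide_eq_true_eq]
      omega
    · have hxa : x < a := hl.1 a ha'
      rw [List.idxOf_cons_ne _ (by omega : x ≠ a),
        List.countP_cons_of_pos (by simpa using hxa), ih hl.2 ha']

lemma aux_countP_sort (E : Finset ℕ) (a : ℕ) :
    (Finset.sort E (· ≤ ·)).countP (· < a) = (E.filter (· < a)).card := by
  have hp := (Finset.sort_perm_toList E (· ≤ ·)).countP_eq (fun x => decide (x < a))
  rw [hp]
  have h2 := Multiset.coe_countP (fun x => x < a) E.toList
  rw [Finset.coe_toList] at h2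
  rw [← h2, Multiset.countP_eq_card_filter, ← Finset.filter_val, Finset.card_def]

lemma aux_level_eq_card_filter (E : Finset ℕ) (a : ℕ) (ha : a ∈ E) :
    level a E = (E.filter (· < a)).card := by
  rw [level, aux_sorted_indexOf_eq_countP _ (Finset.sortedLT_sort E).pairwise a
    ((Finset.mem_sort _).2 ha), aux_countP_sort]

lemma aux_nth_mem (E : Finset ℕ) (r : ℕ) (h1 : 1 ≤ r) (h2 : r ≤ E.card) : nth E r ∈ E := by
  have hlen : r - 1 < (Finset.sort E (· ≤ ·)).length := by rw [Finset.length_sort]; omega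
  rw [nth, List.getD_eq_get _ _ ⟨_, hlen⟩]
  exact (Finset.mem_sort _).1 (List.get_mem _ _)

lemma aux_nth_eq_of_filter (E : Finset ℕ) (y : ℕ) (hy : y ∈ E) (r : ℕ) (h1 : 1 ≤ r)
    (hf : (E.filter (· < y)).card = r - 1) : nth E r = y := by
  have hmem : y ∈ Finset.sort E (· ≤ ·) := (Finset.mem_sort _).2 hy
  have hidx : (Finset.sort E (· ≤ ·)).idxOf y = r - 1 := by
    rw [aux_sorted_indexOf_eq_countP _ (Finset.sortedLT_sort E).pairwise y hmem, aux_countP_sort, hf]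
  have hlt : r - 1 < (Finset.sort E (· ≤ ·)).length := by
    rw [← hidx]; exact List.idxOf_lt_length_iff.2 hmem
  rw [nth, List.getD_eq_get _ _ ⟨_, hlt⟩]
  have := List.idxOf_get (a := y) (l := Finset.sort E (· ≤ ·)) (by rw [hidx]; exact hlt)
  simpa [hidx] using this

lemma aux_filter_nth (E : Finset ℕ) (r : ℕ) (h1 : 1 ≤ r) (h2 : r ≤ E.card) :
    (E.filter (· < nth E r)).card = r - 1 := by
  have hlen : r - 1 < (Finset.sort E (· ≤ ·)).length := by rw [Finset.length_sort]; omega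
  have hmem := aux_nth_mem E r h1 h2
  have := aux_level_eq_card_filter E (nth E r) hmem
  rw [← this, level]
  rw [nth, List.getD_eq_get _ _ ⟨_, hlen⟩]
  have hnd : (Finset.sort E (· ≤ ·)).Nodup := (Finset.sortedLT_sort E).nodup
  have hlt2 : (Finset.sort E (· ≤ ·)).idxOf ((Finset.sort E (· ≤ ·)).get ⟨r-1, hlen⟩)
      < (Finset.sort E (· ≤ ·)).length :=
    List.idxOf_lt_length_iff.2 (List.get_mem _ _)
  have := (hnd.get_inj_iff (i := ⟨_, hlt2⟩) (j := ⟨r-1, hlen⟩)).1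
    (List.idxOf_get hlt2)
  exact congrArg Fin.val this

lemma aux_nth_lt_nth (E : Finset ℕ) {r s : ℕ} (h1 : 1 ≤ r) (h : r < s) (h2 : s ≤ E.card) :
    nth E r < nth E s := by
  have hr : r - 1 < (Finset.sort E (· ≤ ·)).length := by rw [Finset.length_sort]; omega
  have hs : s - 1 < (Finset.sort E (· ≤ ·)).length := by rw [Finset.length_sort]; omega
  rw [nth, nth, List.getD_eq_get _ _ ⟨_, hr⟩, List.getD_eq_get _ _ ⟨_, hs⟩]
  exact (Finset.sortedLT_sort E).strictMono_get (by simp [Fin.mk_lt_mk]; omega)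

lemma aux_nth_le_nth (E : Finset ℕ) {r s : ℕ} (h1 : 1 ≤ r) (h : r ≤ s) (h2 : s ≤ E.card) :
    nth E r ≤ nth E s := by
  rcases eq_or_lt_of_le h with rfl | h'
  · exact le_refl _
  · exact le_of_lt (aux_nth_lt_nth E h1 h' h2)

lemma aux_dom_nth {B A : Finset ℕ} (hdom : Dom B A) {r : ℕ} (h1 : 1 ≤ r) (h2 : r ≤ B.card) :
    nth B r ≤ nth A r := by
  rw [Dom, List.forall₂_iff_get] at hdom
  obtain ⟨hlen, hget⟩ := hdom
  have hr : r - 1 < (Finset.sort B (· ≤ ·)).length := by rw [Finset.length_sort]; omega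
  have hr' : r - 1 < (Finset.sort A (· ≤ ·)).length := by omega
  rw [nth, nth, List.getD_eq_get _ _ ⟨_, hr⟩, List.getD_eq_get _ _ ⟨_, hr'⟩]
  exact hget _ hr hr'

lemma aux_card_filter_insert (E : Finset ℕ) (x a : ℕ) (hx : x ∉ E) :
    ((insert x E).filter (· < a)).card
      = (E.filter (· < a)).card + (if x < a then 1 else 0) := by
  rw [Finset.filter_insert]
  split
  · rw [Finset.card_insert_of_notMem (by simp [hx])]
  · simp

theorem stmt8 (n t : ℕ) (A B : Finset ℕ) (hAs : A ⊆ Finset.Icc 1 n) (hBs : B ⊆ Finset.Icc 1 n)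
    (hAc : A.card = t) (hBc : B.card = t) (hdom : Dom B A)
    (γ : ℕ) (hγ : γ ∈ Finset.Icc 1 n) (hγA : γ ∉ A)
    (q : ℕ) (hq1 : 1 ≤ q) (hq2 : q ≤ t + 1)
    (hqP : q ≤ t → nth B q > nth (insert γ A) q)
    (hqmin : ∀ r, 1 ≤ r → r < q → nth B r ≤ nth (insert γ A) r) :
    ∀ α, α ∈ A → α ∈ B → level α A = level α B →
      level α (insert γ A) = level α (insert (nth (insert γ A) q) B) := by
  intro α hαA hαB hlev
  have hA'c : (insert γ A).card = t + 1 := by rw [Finset.card_insert_of_notMem hγA, hAc]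
  obtain ⟨k, hk⟩ : ∃ k, (A.filter (· < α)).card = k := ⟨_, rfl⟩
  have hkB : (B.filter (· < α)).card = k := by
    rw [← aux_level_eq_card_filter B α hαB, ← hlev, aux_level_eq_card_filter A α hαA, hk]
  have hkt : k < t := by
    rw [← hk, ← hAc]
    exact Finset.card_lt_card ⟨Finset.filter_subset _ _, fun h => by
      have := h hαA; simp at this⟩
  have hγα : γ ≠ α := fun h => hγA (h ▸ hαA)
  have hαA' : α ∈ insert γ A := Finset.mem_insert_of_mem hαA
  have hnthB : nth B (k + 1) = α :=
    aux_nth_eq_of_filter B α hαB (k+1) (by omega) (by omega)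
  -- α' ∉ B
  have hα'B : nth (insert γ A) q ∉ B := by
    intro hmem
    obtain ⟨m, hm⟩ : ∃ m, (B.filter (· < nth (insert γ A) q)).card = m := ⟨_, rfl⟩
    have hmt : m < t := by
      rw [← hm, ← hBc]
      exact Finset.card_lt_card ⟨Finset.filter_subset _ _, fun h => by
        have := h hmem; simp at this⟩
    have hnth : nth B (m + 1) = nth (insert γ A) q :=
      aux_nth_eq_of_filter B _ hmem (m+1) (by omega) (by omega)
    rcases lt_or_ge (m+1) q with h | h
    · have h1 := hqmin (m+1) (by omega) h
      have h2 : nth (insert γ A) (m+1) < nth (insert γ A) q :=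
        aux_nth_lt_nth _ (by omega) h (by omega)
      omega
    · have h1 := hqP (by omega)
      have h2 : nth B q ≤ nth B (m+1) := aux_nth_le_nth B hq1 h (by omega)
      omega
  have hα'α : nth (insert γ A) q ≠ α := fun h => hα'B (h ▸ hαB)
  -- key: γ < α ↔ nth (insert γ A) q < α
  have hiff : γ < α ↔ nth (insert γ A) q < α := by
    constructor
    · intro hγlt
      have hfA' : ((insert γ A).filter (· < α)).card = k + 1 := by
        rw [aux_card_filter_insert A γ α hγA, if_pos hγlt, hk]
      have hnthA' : nth (insert γ A) (k + 2) = α :=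
        aux_nth_eq_of_filter _ α hαA' (k+2) (by omega) (by omega)
      have hqk : q ≤ k + 1 := by
        by_contra h
        push_neg at h
        have h1 := hqmin (k+1) (by omega) (by omega)
        have h2 : nth (insert γ A) (k+1) < nth (insert γ A) (k+2) :=
          aux_nth_lt_nth _ (by omega) (by omega) (by omega)
        omega
      have h3 : nth (insert γ A) q ≤ nth (insert γ A) (k+1) :=
        aux_nth_le_nth _ hq1 hqk (by omega)
      have h4 : nth (insert γ A) (k+1) < nth (insert γ A) (k+2) :=
        aux_nth_lt_nth _ (by omega) (by omega) (by omega)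
      omega
    · intro hα'lt
      by_contra hγlt
      have hαγ : α < γ := by omega
      have hfA' : ((insert γ A).filter (· < α)).card = k := by
        rw [aux_card_filter_insert A γ α hγA, if_neg (by omega), hk]
        omega
      have hnthA' : nth (insert γ A) (k + 1) = α :=
        aux_nth_eq_of_filter _ α hαA' (k+1) (by omega) (by omega)
      rcases lt_or_ge (k+1) q with hkq | hkq
      · have : nth (insert γ A) (k+1) < nth (insert γ A) q :=
          aux_nth_lt_nth _ (by omega) hkq (by omega)
        omega
      · have h1 := hqP (by omega)
        have h2 : nth B q ≤ nth A q := aux_dom_nth hdom hq1 (by omega)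
        have hy : nth (insert γ A) q ≤ nth (insert γ A) (k+1) :=
          aux_nth_le_nth _ hq1 hkq (by omega)
        have hyA' : nth (insert γ A) q ∈ insert γ A := aux_nth_mem _ q hq1 (by omega)
        have hyA : nth (insert γ A) q ∈ A := by
          rcases Finset.mem_insert.1 hyA' with h | h
          · omega
          · exact h
        have hfy : (A.filter (· < nth (insert γ A) q)).card = q - 1 := by
          have h5 := aux_filter_nth (insert γ A) q hq1 (by omega)
          rw [aux_card_filter_insert A γ (nth (insert γ A) q) hγA, if_neg (by omega)] at h5
          simpa using h5
        have hAq : nth A q = nth (insert γ A) q := aux_nth_eq_of_filter A _ hyA q hq1 hfy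
        omega
  -- conclude
  have hαB' : α ∈ insert (nth (insert γ A) q) B := Finset.mem_insert_of_mem hαB
  rw [aux_level_eq_card_filter _ α hαA', aux_level_eq_card_filter _ α hαB',
    aux_card_filter_insert A γ α hγA, aux_card_filter_insert B _ α hα'B, hk, hkB]
  rcases lt_trichotomy γ α with h | h | h
  · rw [if_pos h, if_pos (hiff.1 h)]
  · exact absurd h hγα
  · rw [if_neg (by omega), if_neg (by intro h'; have := hiff.2 h'; omega)]
end

section
/- Fix p ≤ n, a p-element subset Y = {y_1 < ... < y_p} of [n], and a permutation w of [n] with one-line notation w_1...w_n such that Y ≤ {w_1,...,w_p}. Define σ_1,...,σ_p recursively by: σ_j is the maximum element of Y \ {σ_1,...,σ_{j-1}} not exceeding w_j. Then σ_j is well-defined for every j = 1,...,p; that is, at each step j the set {y ∈ Y \ {σ_1,...,σ_{j-1}} : y ≤ w_j} is nonempty. -/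
lemma countP_le_of_forall₂ (x : ℕ) {L M : List ℕ}
    (h : List.Forall₂ (· ≤ ·) L M) :
    M.countP (fun a => decide (a ≤ x)) ≤ L.countP (fun a => decide (a ≤ x)) := by
  induction h with
  | nil => simp
  | @cons a b L M hab _ ih =>
      simp only [List.countP_cons]
      have : (if decide (b ≤ x) = true then 1 else 0)
          ≤ (if decide (a ≤ x) = true then 1 else 0) := by
        by_cases hb : b ≤ x
        · simp [hb, le_trans hab hb]
        · simp [hb]
      omega

lemma card_filter_eq_countP_sort (E : Finset ℕ) (x : ℕ) :
    (E.filter (fun y => y ≤ x)).card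
      = (Finset.sort E (· ≤ ·)).countP (fun a => decide (a ≤ x)) := by
  rw [← Multiset.coe_countP, Finset.sort_eq, Multiset.countP_eq_card_filter]
  rfl

theorem stmt10 (n p : ℕ) (hp : p ≤ n) (w σ : ℕ → ℕ)
    -- w is a permutation of [n], given by its one-line notation on {1,...,n}:
    (hw : Set.BijOn w (Set.Icc 1 n) (Set.Icc 1 n))
    (Y : Finset ℕ) (hYs : Y ⊆ Finset.Icc 1 n) (hYc : Y.card = p)
    -- Y ≤ {w_1,...,w_p}:
    (hdom : Dom Y ((Finset.Icc 1 p).image w)) :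
    -- if σ_1, ..., σ_{j-1} have been chosen by the rule, then the set from which σ_j is to be
    -- chosen as the maximum is nonempty:
    ∀ j, 1 ≤ j → j ≤ p →
      (∀ k, 1 ≤ k → k < j →
        ((Y \ ((Finset.Icc 1 (k - 1)).image σ)).filter (fun y => y ≤ w k)).max = (σ k : WithBot ℕ)) →
      ((Y \ ((Finset.Icc 1 (j - 1)).image σ)).filter (fun y => y ≤ w j)).Nonempty := by
  intro j hj1 hjp hσ
  -- injectivity of w on [1,p]
  have hinj : Set.InjOn w (Set.Icc 1 p) :=
    hw.injOn.mono (Set.Icc_subset_Icc_right hp)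
  -- base counting inequality, from dominance
  have base : ∀ x, ((Finset.Icc 1 p).filter (fun k => w k ≤ x)).card
      ≤ (Y.filter (fun y => y ≤ x)).card := by
    intro x
    have h1 : ((Finset.Icc 1 p).filter (fun k => w k ≤ x)).card
        = (((Finset.Icc 1 p).image w).filter (fun y => y ≤ x)).card := by
      rw [Finset.filter_image, Finset.card_image_of_injOn]
      intro a ha b hb hab
      have ha' : a ∈ Finset.Icc 1 p := (Finset.mem_filter.mp ha).1
      have hb' : b ∈ Finset.Icc 1 p := (Finset.mem_filter.mp hb).1
      exact hinj (by simpa [Set.mem_Icc] using Finset.mem_Icc.mp ha')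
        (by simpa [Set.mem_Icc] using Finset.mem_Icc.mp hb') hab
    rw [h1, card_filter_eq_countP_sort, card_filter_eq_countP_sort]
    exact countP_le_of_forall₂ x hdom
  -- the main invariant, by induction
  have inv : ∀ m, 1 ≤ m → m ≤ j → ∀ x,
      ((Finset.Icc m p).filter (fun k => w k ≤ x)).card
        ≤ ((Y \ ((Finset.Icc 1 (m - 1)).image σ)).filter (fun y => y ≤ x)).card := by
    intro m hm1
    induction m, hm1 using Nat.le_induction with
    | base =>
        intro _ x
        simpa using base x
    | succ m hm1 ih =>
        intro hmj x
        have hmj' : m ≤ j := le_trans (Nat.le_succ m) hmj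
        have hmltj : m < j := hmj
        have hmp : m ≤ p := le_trans (le_of_lt hmltj) hjp
        set Rm : Finset ℕ := Y \ ((Finset.Icc 1 (m - 1)).image σ) with hRm
        set Sm : Finset ℕ := Rm.filter (fun y => y ≤ w m) with hSm
        have hmax : Sm.max = (σ m : WithBot ℕ) := hσ m hm1 hmltj
        have hσmem : σ m ∈ Sm := Finset.mem_of_max hmax
        have hσY : σ m ∈ Rm := (Finset.mem_filter.mp hσmem).1
        have hσw : σ m ≤ w m := (Finset.mem_filter.mp hσmem).2
        have hσtop : ∀ y ∈ Sm, y ≤ σ m := by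
          intro y hy
          have := Finset.le_max hy
          rw [hmax] at this
          exact WithBot.coe_le_coe.mp this
        -- rewrite R (m+1) as Rm.erase (σ m)
        have hIcc : Finset.Icc 1 (m + 1 - 1) = insert m (Finset.Icc 1 (m - 1)) := by
          ext k
          simp only [Finset.mem_Icc, Finset.mem_insert]
          omega
        have hRnext : Y \ ((Finset.Icc 1 (m + 1 - 1)).image σ) = Rm.erase (σ m) := by
          rw [hIcc, Finset.image_insert, Finset.sdiff_insert]
        rw [hRnext, Finset.filter_erase]
        -- rewrite Icc (m+1) p as (Icc m p).erase m
        have hIcc2 : Finset.Icc (m + 1) p = (Finset.Icc m p).erase m := by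
          ext k
          simp only [Finset.mem_Icc, Finset.mem_erase]
          omega
        rw [hIcc2, Finset.filter_erase]
        rcases le_or_gt (w m) x with hwx | hxw
        · -- w m ≤ x : both sides lose one element
          have hmL : m ∈ (Finset.Icc m p).filter (fun k => w k ≤ x) := by
            simp [Finset.mem_Icc, hmp, hwx]
          have hσR : σ m ∈ Rm.filter (fun y => y ≤ x) := by
            simp only [Finset.mem_filter]
            exact ⟨hσY, le_trans hσw hwx⟩
          rw [Finset.card_erase_of_mem hmL, Finset.card_erase_of_mem hσR]
          exact Nat.sub_le_sub_right (ih hmj' x) 1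
        · rcases lt_or_ge x (σ m) with hxσ | hσx
          · -- x < σ m : erasing σ m changes nothing
            have : σ m ∉ Rm.filter (fun y => y ≤ x) := by
              simp only [Finset.mem_filter, not_and]
              intro _
              omega
            rw [Finset.erase_eq_of_notMem this]
            calc (((Finset.Icc m p).filter (fun k => w k ≤ x)).erase m).card
                ≤ ((Finset.Icc m p).filter (fun k => w k ≤ x)).card :=
                  Finset.card_le_card (Finset.erase_subset _ _)
              _ ≤ (Rm.filter (fun y => y ≤ x)).card := ih hmj' x
          · -- σ m ≤ x < w m : use maximality of σ m
            have hkey : Rm.filter (fun y => y ≤ x) = Sm := by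
              ext y
              simp only [hSm, Finset.mem_filter]
              constructor
              · rintro ⟨hy, hyx⟩
                exact ⟨hy, le_trans hyx (le_of_lt hxw)⟩
              · rintro ⟨hy, hyw⟩
                exact ⟨hy, le_trans (hσtop y (by simp [hSm, Finset.mem_filter, hy, hyw])) hσx⟩
            rw [hkey, Finset.card_erase_of_mem hσmem]
            have h1 : ((Finset.Icc m p).filter (fun k => w k ≤ x)).erase m
                ⊆ ((Finset.Icc m p).filter (fun k => w k ≤ w m)).erase m := by
              apply Finset.erase_subset_erase
              intro k hk
              simp only [Finset.mem_filter] at hk ⊢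
              exact ⟨hk.1, le_trans hk.2 (le_of_lt hxw)⟩
            have h2 : m ∈ (Finset.Icc m p).filter (fun k => w k ≤ w m) := by
              simp [Finset.mem_Icc, hmp]
            calc (((Finset.Icc m p).filter (fun k => w k ≤ x)).erase m).card
                ≤ (((Finset.Icc m p).filter (fun k => w k ≤ w m)).erase m).card :=
                  Finset.card_le_card h1
              _ = ((Finset.Icc m p).filter (fun k => w k ≤ w m)).card - 1 :=
                  Finset.card_erase_of_mem h2
              _ ≤ Sm.card - 1 := Nat.sub_le_sub_right (ih hmj' (w m)) 1
  -- conclude: apply the invariant at x = w j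
  have hj : j ∈ (Finset.Icc j p).filter (fun k => w k ≤ w j) := by
    simp [Finset.mem_Icc, hjp]
  have h1 : 1 ≤ ((Finset.Icc j p).filter (fun k => w k ≤ w j)).card :=
    Finset.card_pos.mpr ⟨j, hj⟩
  have := le_trans h1 (inv j hj1 le_rfl (w j))
  exact Finset.card_pos.mp (lt_of_lt_of_le Nat.zero_lt_one this)
end

section
/- With the recursive definition σ_j := max{y ∈ Y \ {σ_1,...,σ_{j-1}} : y ≤ w_j} (for 1 ≤ j ≤ p, under the hypothesis Y ≤ {w_1,...,w_p}), for any i ≤ p and any y ∈ Y \ {σ_1,...,σ_{i-1}}: (1) σ_i ≤ w_i; (2) σ_i < y if and only if w_i < y; (3) |{k ≤ i : w_k ≤ y-1}| = |{k ≤ i : σ_k ≤ y-1}|. -/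
theorem stmt11 (n p : ℕ) (hp : p ≤ n) (w σ : ℕ → ℕ)
    (hw : Set.BijOn w (Set.Icc 1 n) (Set.Icc 1 n))
    (Y : Finset ℕ) (hYs : Y ⊆ Finset.Icc 1 n) (hYc : Y.card = p)
    (hdom : Dom Y ((Finset.Icc 1 p).image w))
    -- σ_j is the maximum element of Y \ {σ_1,...,σ_{j-1}} not exceeding w_j:
    (hσ : ∀ j, 1 ≤ j → j ≤ p →
      ((Y \ ((Finset.Icc 1 (j - 1)).image σ)).filter (fun y => y ≤ w j)).max = (σ j : WithBot ℕ)) :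
    ∀ i, 1 ≤ i → i ≤ p → ∀ y ∈ Y \ ((Finset.Icc 1 (i - 1)).image σ),
      σ i ≤ w i ∧
      (σ i < y ↔ w i < y) ∧
      ((((Finset.Icc 1 i).image w).filter (fun x => x ≤ y - 1)).card =
        (((Finset.Icc 1 i).image σ).filter (fun x => x ≤ y - 1)).card) := by
  have hmem : ∀ j, 1 ≤ j → j ≤ p →
      σ j ∈ (Y \ ((Finset.Icc 1 (j - 1)).image σ)).filter (fun y => y ≤ w j) := by
    intro j h1 h2
    exact Finset.mem_of_max (hσ j h1 h2)
  have hle : ∀ j, 1 ≤ j → j ≤ p → σ j ≤ w j := by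
    intro j h1 h2
    exact (Finset.mem_filter.mp (hmem j h1 h2)).2
  have hsd : ∀ j, 1 ≤ j → j ≤ p → σ j ∈ Y \ ((Finset.Icc 1 (j - 1)).image σ) := by
    intro j h1 h2
    exact (Finset.mem_filter.mp (hmem j h1 h2)).1
  have hmax : ∀ j, 1 ≤ j → j ≤ p → ∀ y ∈ Y \ ((Finset.Icc 1 (j - 1)).image σ),
      y ≤ w j → y ≤ σ j := by
    intro j h1 h2 y hy hyw
    have hmem2 : y ∈ (Y \ ((Finset.Icc 1 (j - 1)).image σ)).filter (fun z => z ≤ w j) :=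
      Finset.mem_filter.mpr ⟨hy, hyw⟩
    have h := Finset.le_max hmem2
    rw [hσ j h1 h2] at h
    exact WithBot.coe_le_coe.mp h
  -- part 2
  have part2 : ∀ i, 1 ≤ i → i ≤ p → ∀ y ∈ Y \ ((Finset.Icc 1 (i - 1)).image σ),
      (σ i < y ↔ w i < y) := by
    intro i h1 h2 y hy
    constructor
    · intro h
      by_contra hc
      push_neg at hc
      exact absurd (hmax i h1 h2 y hy hc) (not_le.mpr h)
    · intro h
      exact lt_of_le_of_lt (hle i h1 h2) h
  -- σ is injective on [1,p]
  have hσinj : ∀ j k, 1 ≤ j → j < k → k ≤ p → σ j ≠ σ k := by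
    intro j k hj hjk hk heq
    have hk1 : 1 ≤ k := le_trans hj (le_of_lt hjk)
    have h := (Finset.mem_sdiff.mp (hsd k hk1 hk)).2
    apply h
    apply Finset.mem_image.mpr
    exact ⟨j, Finset.mem_Icc.mpr ⟨hj, Nat.le_sub_one_of_lt hjk⟩, heq⟩
  -- count conversion
  have hwinj : Set.InjOn w (Set.Icc 1 n) := hw.injOn
  have conv : ∀ (f : ℕ → ℕ) (i y : ℕ), i ≤ p →
      (∀ a b, a ∈ Finset.Icc 1 i → b ∈ Finset.Icc 1 i → f a = f b → a = b) →
      (((Finset.Icc 1 i).image f).filter (fun x => x ≤ y - 1)).card =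
        ((Finset.Icc 1 i).filter (fun k => f k ≤ y - 1)).card := by
    intro f i y hi hinj
    rw [Finset.filter_image]
    apply Finset.card_image_of_injOn
    intro a ha b hb hab
    simp only [Finset.coe_filter, Set.mem_setOf_eq] at ha hb
    exact hinj a b ha.1 hb.1 hab
  have hwinj' : ∀ i, i ≤ p → ∀ a b, a ∈ Finset.Icc 1 i → b ∈ Finset.Icc 1 i →
      w a = w b → a = b := by
    intro i hi a b ha hb hab
    rw [Finset.mem_Icc] at ha hb
    exact hwinj ⟨ha.1, le_trans ha.2 (le_trans hi hp)⟩ ⟨hb.1, le_trans hb.2 (le_trans hi hp)⟩ hab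
  have hσinj' : ∀ i, i ≤ p → ∀ a b, a ∈ Finset.Icc 1 i → b ∈ Finset.Icc 1 i →
      σ a = σ b → a = b := by
    intro i hi a b ha hb hab
    rw [Finset.mem_Icc] at ha hb
    rcases lt_trichotomy a b with h | h | h
    · exact absurd hab (hσinj a b ha.1 h (le_trans hb.2 hi))
    · exact h
    · exact absurd hab.symm (hσinj b a hb.1 h (le_trans ha.2 hi))
  -- part 3 by induction
  have part3 : ∀ i, i ≤ p → ∀ y ∈ Y \ ((Finset.Icc 1 (i - 1)).image σ),
      ((Finset.Icc 1 i).filter (fun k => w k ≤ y - 1)).card =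
        ((Finset.Icc 1 i).filter (fun k => σ k ≤ y - 1)).card := by
    intro i
    induction i with
    | zero => intro _ y _; simp
    | succ m ih =>
      intro hi y hy
      have hm : m ≤ p := le_of_lt (Nat.lt_of_succ_le hi)
      have hy1 : 1 ≤ y := by
        have := hYs (Finset.mem_sdiff.mp hy).1
        exact (Finset.mem_Icc.mp this).1
      have hy' : y ∈ Y \ ((Finset.Icc 1 (m - 1)).image σ) := by
        rw [Finset.mem_sdiff] at hy ⊢
        refine ⟨hy.1, fun hc => hy.2 ?_⟩
        exact Finset.image_subset_image (Finset.Icc_subset_Icc_right (Nat.sub_le m 1)) hc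
      have hIH := ih hm y hy'
      have hy'' : y ∈ Y \ ((Finset.Icc 1 (m + 1 - 1)).image σ) := by
        simpa using hy
      have h2 := part2 (m + 1) (Nat.le_add_left 1 m) hi y hy''
      have hiff : (w (m + 1) ≤ y - 1) ↔ (σ (m + 1) ≤ y - 1) := by
        rw [Nat.le_sub_one_iff_lt hy1, Nat.le_sub_one_iff_lt hy1]
        exact h2.symm
      have hsplit : Finset.Icc 1 (m + 1) = insert (m + 1) (Finset.Icc 1 m) := by
        ext x
        simp only [Finset.mem_Icc, Finset.mem_insert]
        omega
      have hnot : m + 1 ∉ Finset.Icc 1 m := by simp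
      rw [hsplit, Finset.filter_insert, Finset.filter_insert]
      by_cases hc : w (m + 1) ≤ y - 1
      · rw [if_pos hc, if_pos (hiff.mp hc),
          Finset.card_insert_of_notMem (fun h => hnot (Finset.filter_subset _ _ h)),
          Finset.card_insert_of_notMem (fun h => hnot (Finset.filter_subset _ _ h)), hIH]
      · rw [if_neg hc, if_neg (fun h => hc (hiff.mpr h)), hIH]
  intro i h1 h2 y hy
  refine ⟨hle i h1 h2, part2 i h1 h2 y hy, ?_⟩
  have hy' : y ∈ Y \ ((Finset.Icc 1 (i - 1)).image σ) := hy
  rw [conv w i y h2 (hwinj' i h2), conv σ i y h2 (hσinj' i h2)]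
  exact part3 i h2 y hy'
end

section
/- Let σ be the output of the Deodhar maximal lift procedure with inputs p, Y, and w (with Y ≤ {w_1,...,w_p}). Then for each i with p < i ≤ n: (1) w_i ≤ σ_i; (2) {σ_1,...,σ_i} ≤ {w_1,...,w_i}; (3) σ_i belongs to {w_1,...,w_i} and has the same level (rank in increasing order) in {σ_1,...,σ_i} as in {w_1,...,w_i}; (4) for any j ≥ i, σ_i belongs to {w_1,...,w_j} and has the same level in {σ_1,...,σ_j} as in {w_1,...,w_j}; (5) if j > i and w_j < σ_i, then σ_j < σ_i. -/
/-- The Bruhat order, via the tableau criterion, on permutations of `[n] = {1,...,n}`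
given in one-line notation as functions `ℕ → ℕ`. -/
def Bruhat (n : ℕ) (v w : ℕ → ℕ) : Prop :=
  ∀ i ≤ n, Dom ((Finset.Icc 1 i).image v) ((Finset.Icc 1 i).image w)

namespace Deo

def cnt (E : Finset ℕ) (e : ℕ) : ℕ := (E.filter (· < e)).card

lemma cnt_le_card (E : Finset ℕ) (e : ℕ) : cnt E e ≤ E.card := Finset.card_filter_le _ _

lemma cnt_mono (E : Finset ℕ) {e e' : ℕ} (h : e ≤ e') : cnt E e ≤ cnt E e' :=
  Finset.card_le_card (Finset.monotone_filter_right E (fun x _ hx => lt_of_lt_of_le hx h))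

lemma cnt_insert {E : Finset ℕ} {x : ℕ} (hx : x ∉ E) (e : ℕ) :
    cnt (insert x E) e = cnt E e + if x < e then 1 else 0 := by
  unfold cnt
  rw [Finset.filter_insert]
  split
  · rw [Finset.card_insert_of_notMem (fun h => hx (Finset.mem_filter.mp h).1)]
  · simp

lemma get_lt_iff_filter : ∀ {l : List ℕ}, l.Pairwise (· < ·) → ∀ (e : ℕ) (i : ℕ) (hi : i < l.length),
    (l.get ⟨i, hi⟩ < e ↔ i < (l.filter (· < e)).length) := by
  intro l
  induction l with
  | nil => intro _ e i hi; simp at hi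
  | cons a t ih =>
    intro hl e i hi
    have ha : ∀ x ∈ t, a < x := (List.pairwise_cons.mp hl).1
    have ht : t.Pairwise (· < ·) := (List.pairwise_cons.mp hl).2
    by_cases hae : a < e
    · have hf : (a :: t).filter (· < e) = a :: t.filter (· < e) := by
        simp [List.filter_cons, hae]
      cases i with
      | zero => simp [hf, hae]
      | succ m =>
          have hm : m < t.length := by simpa using hi
          have := ih ht e m hm
          simp only [hf, List.length_cons, List.get_cons_succ]
          constructor
          · intro h; exact Nat.succ_lt_succ (this.mp h)
          · intro h; exact this.mpr (Nat.lt_of_succ_lt_succ h)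
    · have htf : t.filter (· < e) = List.nil := by
        apply List.filter_eq_nil_iff.mpr
        intro x hx
        simp only [decide_eq_true_eq]
        exact fun hlt => hae (lt_trans (ha x hx) hlt)
      have hf : (a :: t).filter (· < e) = List.nil := by
        simp [List.filter_cons, hae, htf]
      rw [hf]
      simp only [List.length_nil]
      constructor
      · intro h
        cases i with
        | zero => exact absurd h hae
        | succ m =>
            have hm : m < t.length := by simpa using hi
            have h2 : (a :: t).get ⟨m+1, hi⟩ = t.get ⟨m, hm⟩ := rfl
            exact absurd h (fun h => hae (lt_trans (ha (t.get ⟨m, hm⟩) (List.get_mem t ⟨m, hm⟩)) (h2 ▸ h)))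
      · omega

lemma length_sort_filter (E : Finset ℕ) (e : ℕ) :
    ((Finset.sort E (· ≤ ·)).filter (· < e)).length = cnt E e := by
  have h1 : ((Finset.sort E (· ≤ ·)).filter (· < e)).Nodup := (Finset.sort_nodup E _).filter _
  have h2 := List.toFinset_card_of_nodup h1
  rw [List.toFinset_filter, Finset.sort_toFinset] at h2
  rw [← h2]
  unfold cnt
  congr 1
  apply Finset.filter_congr
  intro x _
  simp

lemma cnt_get (E : Finset ℕ) (i : ℕ) (hi : i < (Finset.sort E (· ≤ ·)).length) :
    cnt E ((Finset.sort E (· ≤ ·)).get ⟨i, hi⟩) = i := by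
  have hs := (Finset.sortedLT_sort E).pairwise
  have h1 := (get_lt_iff_filter hs ((Finset.sort E (· ≤ ·)).get ⟨i, hi⟩) i hi)
  rw [length_sort_filter] at h1
  have h2 : ¬ i < cnt E ((Finset.sort E (· ≤ ·)).get ⟨i, hi⟩) :=
    fun h => lt_irrefl _ (h1.mpr h)
  rcases Nat.eq_zero_or_pos i with h0 | h0
  · omega
  · have hm : i - 1 < (Finset.sort E (· ≤ ·)).length := by omega
    have h3 := (get_lt_iff_filter hs ((Finset.sort E (· ≤ ·)).get ⟨i, hi⟩) (i-1) hm)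
    rw [length_sort_filter] at h3
    have h4 : (Finset.sort E (· ≤ ·)).get ⟨i-1, hm⟩ < (Finset.sort E (· ≤ ·)).get ⟨i, hi⟩ :=
      (List.Pairwise.sortedLT hs).strictMono_get (by simp; omega)
    have := h3.mp h4
    omega

lemma nth_get {E : Finset ℕ} {k : ℕ} (h1 : 1 ≤ k) (h2 : k ≤ E.card) :
    nth E k = (Finset.sort E (· ≤ ·)).get
      ⟨k-1, by rw [Finset.length_sort]; omega⟩ := by
  unfold nth
  exact List.getD_eq_get _ 0 ⟨k-1, by rw [Finset.length_sort]; omega⟩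

lemma nth_mem {E : Finset ℕ} {k : ℕ} (h1 : 1 ≤ k) (h2 : k ≤ E.card) : nth E k ∈ E := by
  rw [nth_get h1 h2]
  rw [← Finset.mem_sort (· ≤ ·)]
  exact List.get_mem _ _

lemma cnt_nth {E : Finset ℕ} {k : ℕ} (h1 : 1 ≤ k) (h2 : k ≤ E.card) :
    cnt E (nth E k) = k - 1 := by
  rw [nth_get h1 h2]
  exact cnt_get E (k-1) _

lemma cnt_lt_card {E : Finset ℕ} {e : ℕ} (he : e ∈ E) : cnt E e < E.card := by
  rw [← Finset.mem_sort (· ≤ ·)] at he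
  rcases List.mem_iff_get.mp he with ⟨i, rfl⟩
  rw [cnt_get E i i.isLt]
  have := i.isLt
  have hlen : (Finset.sort E (· ≤ ·)).length = E.card := Finset.length_sort _
  omega

lemma nth_cnt {E : Finset ℕ} {e : ℕ} (he : e ∈ E) : nth E (cnt E e + 1) = e := by
  rw [← Finset.mem_sort (· ≤ ·)] at he
  rcases List.mem_iff_get.mp he with ⟨i, rfl⟩
  rw [cnt_get E i i.isLt]
  have hlen : (Finset.sort E (· ≤ ·)).length = E.card := Finset.length_sort _
  rw [nth_get (by omega) (by have := i.isLt; omega)]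
  congr 1

lemma nth_eq_of {E : Finset ℕ} {e k : ℕ} (he : e ∈ E) (h1 : 1 ≤ k) (hc : cnt E e = k - 1) :
    nth E k = e := by
  have := nth_cnt he
  rw [hc] at this
  rwa [show k - 1 + 1 = k by omega] at this

lemma nth_lt_iff {E : Finset ℕ} {r e : ℕ} (h1 : 1 ≤ r) (h2 : r ≤ E.card) :
    nth E r < e ↔ r ≤ cnt E e := by
  rw [nth_get h1 h2]
  have hi : r - 1 < (Finset.sort E (· ≤ ·)).length := by rw [Finset.length_sort]; omega
  have := get_lt_iff_filter ((Finset.sortedLT_sort E).pairwise) e (r-1) hi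
  rw [length_sort_filter] at this
  rw [this]
  omega

lemma nth_strict {E : Finset ℕ} {r r' : ℕ} (h1 : 1 ≤ r) (h : r < r') (h2 : r' ≤ E.card) :
    nth E r < nth E r' := by
  rw [nth_lt_iff h1 (by omega), cnt_nth (by omega) h2]
  omega

lemma nth_mono {E : Finset ℕ} {r r' : ℕ} (h1 : 1 ≤ r) (h : r ≤ r') (h2 : r' ≤ E.card) :
    nth E r ≤ nth E r' := by
  rcases eq_or_lt_of_le h with rfl | h
  · exact le_refl _
  · exact le_of_lt (nth_strict h1 h h2)

lemma level_eq_cnt {E : Finset ℕ} {e : ℕ} (he : e ∈ E) : level e E = cnt E e := by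
  rw [← Finset.mem_sort (· ≤ ·)] at he
  rcases List.mem_iff_get.mp he with ⟨i, rfl⟩
  rw [cnt_get E i i.isLt]
  unfold level
  exact List.get_idxOf (Finset.sort_nodup E _) i

lemma dom_iff {E F : Finset ℕ} (h : E.card = F.card) :
    Dom E F ↔ ∀ r, 1 ≤ r → r ≤ F.card → nth E r ≤ nth F r := by
  unfold Dom
  rw [List.forall₂_iff_get]
  constructor
  · rintro ⟨hl, hg⟩ r hr1 hr2
    rw [nth_get (E := E) hr1 (by omega), nth_get (E := F) hr1 hr2]
    exact hg (r-1) _ _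
  · intro hg
    refine ⟨by simp [Finset.length_sort, h], ?_⟩
    intro i h1 h2
    have := hg (i+1) (by omega) (by rw [Finset.length_sort] at h2; omega)
    rw [nth_get (by omega) (by rw [Finset.length_sort] at h1; omega),
        nth_get (by omega) (by rw [Finset.length_sort] at h2; omega)] at this
    simpa using this

lemma cnt_to_nth {E F : Finset ℕ} (h : E.card = F.card) (hc : ∀ e, cnt F e ≤ cnt E e) :
    ∀ r, 1 ≤ r → r ≤ F.card → nth E r ≤ nth F r := by
  intro r h1 h2
  by_contra hlt
  push_neg at hlt
  have := (nth_lt_iff h1 h2).mp hlt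
  have h3 := hc (nth E r)
  have h4 := cnt_nth h1 (h ▸ h2)
  omega

lemma nth_to_cnt {E F : Finset ℕ} (h : E.card = F.card)
    (hd : ∀ r, 1 ≤ r → r ≤ F.card → nth E r ≤ nth F r) : ∀ e, cnt F e ≤ cnt E e := by
  intro e
  by_cases h0 : cnt F e = 0
  · omega
  · have h1 : 1 ≤ cnt F e := by omega
    have h2 : cnt F e ≤ F.card := cnt_le_card F e
    have h3 : nth F (cnt F e) < e := (nth_lt_iff h1 h2).mpr (le_refl _)
    have h4 := hd (cnt F e) h1 h2
    exact (nth_lt_iff h1 (h ▸ h2)).mp (lt_of_le_of_lt h4 h3)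

end Deo

namespace Deo

def Inv (w σ : ℕ → ℕ) (p k : ℕ) : Prop :=
  ((Finset.Icc 1 k).image σ).card = k ∧
  (∀ e, cnt ((Finset.Icc 1 k).image w) e ≤ cnt ((Finset.Icc 1 k).image σ) e) ∧
  (∀ i, p < i → i ≤ k → w i ≤ σ i ∧ σ i ∈ (Finset.Icc 1 k).image w ∧
    cnt ((Finset.Icc 1 k).image σ) (σ i) = cnt ((Finset.Icc 1 k).image w) (σ i))

lemma Wcard {n : ℕ} {w : ℕ → ℕ} (hw : Set.BijOn w (Set.Icc 1 n) (Set.Icc 1 n))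
    {k : ℕ} (hk : k ≤ n) : ((Finset.Icc 1 k).image w).card = k := by
  rw [Finset.card_image_of_injOn, Nat.card_Icc]
  · omega
  · rw [Finset.coe_Icc]
    exact hw.injOn.mono (Set.Icc_subset_Icc_right hk)

lemma Wnotmem {n : ℕ} {w : ℕ → ℕ} (hw : Set.BijOn w (Set.Icc 1 n) (Set.Icc 1 n))
    {k : ℕ} (hk : k < n) : w (k+1) ∉ (Finset.Icc 1 k).image w := by
  intro h
  rcases Finset.mem_image.mp h with ⟨x, hx, hxe⟩
  rw [Finset.mem_Icc] at hx
  have := hw.injOn (by simp [Set.mem_Icc]; omega) (by simp [Set.mem_Icc]; omega) hxe.symm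
  omega

lemma image_succ (f : ℕ → ℕ) (k : ℕ) :
    (Finset.Icc 1 (k+1)).image f = insert (f (k+1)) ((Finset.Icc 1 k).image f) := by
  rw [← Finset.insert_Icc_right_eq_Icc_add_one (by omega), Finset.image_insert]

lemma step (w σ : ℕ → ℕ) (n p k : ℕ) (hw : Set.BijOn w (Set.Icc 1 n) (Set.Icc 1 n))
    (hσ2 : ∀ j, p < j → j ≤ n → ∃ q, 1 ≤ q ∧ q ≤ j ∧
      (q ≤ j - 1 →
        nth ((Finset.Icc 1 (j - 1)).image σ) q > nth ((Finset.Icc 1 j).image w) q) ∧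
      (∀ r, 1 ≤ r → r < q →
        nth ((Finset.Icc 1 (j - 1)).image σ) r ≤ nth ((Finset.Icc 1 j).image w) r) ∧
      σ j = nth ((Finset.Icc 1 j).image w) q)
    (hpk : p ≤ k) (hkn : k < n) (hInv : Inv w σ p k) :
    Inv w σ p (k+1) ∧ (∀ i, p < i → i ≤ k → w (k+1) < σ i → σ (k+1) < σ i) := by
  obtain ⟨hBcard, hdom, hmatch⟩ := hInv
  set A := (Finset.Icc 1 k).image w with hA_def
  set A' := (Finset.Icc 1 (k+1)).image w with hA'_def
  set B := (Finset.Icc 1 k).image σ with hB_def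
  set B' := (Finset.Icc 1 (k+1)).image σ with hB'_def
  have hAcard : A.card = k := Wcard hw (by omega)
  have hA'card : A'.card = k + 1 := Wcard hw (by omega)
  have hγA : w (k+1) ∉ A := Wnotmem hw hkn
  have hA' : A' = insert (w (k+1)) A := image_succ w k
  have hB' : B' = insert (σ (k+1)) B := image_succ σ k
  obtain ⟨q, hq1, hqj, hqlt, hqmin, hσj⟩ := hσ2 (k+1) (by omega) (by omega)
  simp only [Nat.add_sub_cancel] at hqlt hqmin
  rw [← hA_def, ← hA'_def, ← hB_def] at *
  -- (1) w (k+1) ≤ σ (k+1)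
  have hwσ : w (k+1) ≤ σ (k+1) := by
    by_contra h
    push_neg at h
    rw [hσj] at h
    have h1 : q ≤ cnt A' (w (k+1)) := (nth_lt_iff hq1 (by omega)).mp h
    have h2 : cnt A' (w (k+1)) = cnt A (w (k+1)) := by
      rw [hA', cnt_insert hγA]; simp
    have h3 : q ≤ k := by
      have := cnt_le_card A (w (k+1)); omega
    have h4 : nth A' q ∈ A' := nth_mem hq1 (by omega)
    have h4b : nth A' q ∈ insert (w (k+1)) A := by rw [← hA']; exact h4
    have h5 : nth A' q ∈ A := by
      rcases Finset.mem_insert.mp h4b with h'|h'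
      · omega
      · exact h'
    have h6 : cnt A' (nth A' q) = q - 1 := cnt_nth hq1 (by omega)
    have h6b : cnt (insert (w (k+1)) A) (nth A' q) = q - 1 := by rw [← hA']; exact h6
    have h7 : cnt A (nth A' q) = q - 1 := by
      rw [cnt_insert hγA, if_neg (by omega)] at h6b; omega
    have h8 : nth A q = nth A' q := nth_eq_of h5 hq1 h7
    have h9 : nth B q ≤ nth A q := cnt_to_nth (by omega) hdom q hq1 (by omega)
    have h10 := hqlt h3
    omega
  have hσj_memA' : σ (k+1) ∈ A' := by
    rw [hσj]; exact nth_mem hq1 (by omega)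
  -- cnt B (σ (k+1)) = q - 1
  have hcntB : cnt B (σ (k+1)) = q - 1 := by
    have hub : cnt B (σ (k+1)) ≤ q - 1 := by
      by_contra h
      push_neg at h
      have h1 : q ≤ cnt B (σ (k+1)) := by omega
      have h2 : q ≤ k := by have := cnt_le_card B (σ (k+1)); omega
      have h3 : nth B q < σ (k+1) := (nth_lt_iff hq1 (by omega)).mpr h1
      have h4 := hqlt h2
      rw [← hσj] at h4
      omega
    have hlb : q - 1 ≤ cnt B (σ (k+1)) := by
      rcases Nat.eq_or_lt_of_le hq1 with h1 | h1
      · omega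
      · have hr1 : 1 ≤ q - 1 := by omega
        have h2 : nth B (q-1) ≤ nth A' (q-1) := hqmin (q-1) hr1 (by omega)
        have h3 : nth A' (q-1) < nth A' q := nth_strict hr1 (by omega) (by omega)
        have h4 : nth B (q-1) < σ (k+1) := by rw [hσj]; omega
        have := (nth_lt_iff hr1 (by omega : q - 1 ≤ B.card)).mp h4
        omega
    omega
  have hσjB : σ (k+1) ∉ B := by
    intro hmem
    have h1 : q - 1 < k := by have := cnt_lt_card hmem; omega
    have h2 : nth B q = σ (k+1) := nth_eq_of hmem hq1 hcntB
    have h3 := hqlt (by omega)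
    rw [← hσj] at h3
    omega
  have hB'card : B'.card = k + 1 := by
    rw [hB', Finset.card_insert_of_notMem hσjB, hBcard]
  have hcntA'σj : cnt A' (σ (k+1)) = q - 1 := by
    rw [hσj]; exact cnt_nth hq1 (by omega)
  have hcntB'σj : cnt B' (σ (k+1)) = q - 1 := by
    rw [hB', cnt_insert hσjB, if_neg (lt_irrefl _)]; omega
  -- new dominance
  have hdom' : ∀ e, cnt A' e ≤ cnt B' e := by
    intro e
    have hA'e : cnt A' e = cnt A e + if w (k+1) < e then 1 else 0 := by
      rw [hA', cnt_insert hγA]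
    have hB'e : cnt B' e = cnt B e + if σ (k+1) < e then 1 else 0 := by
      rw [hB', cnt_insert hσjB]
    by_cases h1 : σ (k+1) < e
    · have h2 : w (k+1) < e := by omega
      have := hdom e
      rw [hA'e, hB'e, if_pos h1, if_pos h2]
      omega
    · by_cases h2 : w (k+1) < e
      · -- w (k+1) < e ≤ σ (k+1)
        have hrq : cnt A' e < q := by
          by_contra h
          push_neg at h
          have := (nth_lt_iff hq1 (by omega : q ≤ A'.card)).mpr h
          rw [← hσj] at this
          omega
        rcases Nat.eq_zero_or_pos (cnt A' e) with h0 | h0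
        · omega
        · have h3 : nth A' (cnt A' e) < e :=
            (nth_lt_iff h0 (by have := cnt_le_card A' e; omega)).mpr (le_refl _)
          have h4 : nth B (cnt A' e) ≤ nth A' (cnt A' e) := hqmin _ h0 hrq
          have h5 : cnt A' e ≤ cnt B e :=
            (nth_lt_iff h0 (by omega : cnt A' e ≤ B.card)).mp (by omega)
          rw [hB'e]
          omega
      · have := hdom e
        rw [hA'e, hB'e, if_neg h1, if_neg h2]
        omega
  -- claim (5)
  have hfive : ∀ i, p < i → i ≤ k → w (k+1) < σ i → σ (k+1) < σ i := by
    intro i hpi hik hlt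
    obtain ⟨hwi, hiW, hicnt⟩ := hmatch i hpi hik
    have hiB : σ i ∈ B := by
      rw [hB_def]
      exact Finset.mem_image.mpr ⟨i, Finset.mem_Icc.mpr (by omega), rfl⟩
    have hmk : cnt A (σ i) + 1 ≤ k := by have := cnt_lt_card hiW; omega
    have hnthBm : nth B (cnt A (σ i) + 1) = σ i := nth_eq_of hiB (by omega) (by omega)
    have hσiA' : σ i ∈ A' := by rw [hA']; exact Finset.mem_insert_of_mem hiW
    have hcntA'i : cnt A' (σ i) = cnt A (σ i) + 1 := by
      rw [hA', cnt_insert hγA, if_pos hlt]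
    have hnthA'm1 : nth A' (cnt A (σ i) + 2) = σ i := by
      have := nth_cnt hσiA'
      rw [hcntA'i] at this
      exact this
    have hq_le_m : q ≤ cnt A (σ i) + 1 := by
      by_contra h
      push_neg at h
      have h2 := hqmin (cnt A (σ i) + 1) (by omega) h
      have h3 : nth A' (cnt A (σ i) + 1) < nth A' (cnt A (σ i) + 2) :=
        nth_strict (by omega) (by omega) (by omega)
      rw [hnthBm] at h2
      rw [hnthA'm1] at h3
      omega
    have h5 : nth A' q ≤ nth A' (cnt A (σ i) + 1) := nth_mono hq1 hq_le_m (by omega)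
    have h6 : nth A' (cnt A (σ i) + 1) < nth A' (cnt A (σ i) + 2) :=
      nth_strict (by omega) (by omega) (by omega)
    rw [hσj]
    rw [hnthA'm1] at h6
    omega
  refine ⟨⟨hB'card, hdom', ?_⟩, hfive⟩
  intro i hpi hik
  rcases Nat.eq_or_lt_of_le hik with h | h
  · subst h
    exact ⟨hwσ, hσj_memA', hcntB'σj.trans hcntA'σj.symm⟩
  · have hik' : i ≤ k := by omega
    obtain ⟨hwi, hiW, hicnt⟩ := hmatch i hpi hik'
    refine ⟨hwi, by show σ i ∈ A'; rw [hA']; exact Finset.mem_insert_of_mem hiW, ?_⟩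
    show cnt B' (σ i) = cnt A' (σ i)
    have hiB : σ i ∈ B := by
      rw [hB_def]
      exact Finset.mem_image.mpr ⟨i, Finset.mem_Icc.mpr (by omega), rfl⟩
    have hA'e : cnt A' (σ i) = cnt A (σ i) + if w (k+1) < σ i then 1 else 0 := by
      rw [hA', cnt_insert hγA]
    have hB'e : cnt B' (σ i) = cnt B (σ i) + if σ (k+1) < σ i then 1 else 0 := by
      rw [hB', cnt_insert hσjB]
    have hne : w (k+1) ≠ σ i := fun h => hγA (h ▸ hiW)
    by_cases hc : w (k+1) < σ i
    · have := hfive i hpi hik' hc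
      rw [hA'e, hB'e, if_pos hc, if_pos this]
      omega
    · have hc2 : ¬ σ (k+1) < σ i := by omega
      rw [hA'e, hB'e, if_neg hc, if_neg hc2]
      omega

end Deo

namespace Deo

lemma base (w σ : ℕ → ℕ) (n p : ℕ) (hp : p ≤ n)
    (hw : Set.BijOn w (Set.Icc 1 n) (Set.Icc 1 n))
    (Y : Finset ℕ) (hYc : Y.card = p)
    (hdom : Dom Y ((Finset.Icc 1 p).image w))
    (hσ1 : ∀ j, 1 ≤ j → j ≤ p →
      ((Y \ ((Finset.Icc 1 (j - 1)).image σ)).filter (fun y => y ≤ w j)).max = (σ j : WithBot ℕ)) :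
    Inv w σ p p := by
  have key : ∀ j, j ≤ p → (Finset.Icc 1 j).image σ ⊆ Y ∧ ((Finset.Icc 1 j).image σ).card = j := by
    intro j
    induction j with
    | zero =>
        intro _
        constructor <;> simp [Finset.Icc_eq_empty (by omega : ¬(1:ℕ) ≤ 0)]
    | succ m ih =>
        intro hm
        obtain ⟨hsub, hcard⟩ := ih (by omega)
        have hmax := hσ1 (m+1) (by omega) hm
        have hmem := Finset.mem_of_max hmax
        simp only [Nat.add_sub_cancel] at hmem
        rw [Finset.mem_filter, Finset.mem_sdiff] at hmem
        obtain ⟨⟨hY, hnot⟩, -⟩ := hmem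
        simp only [Nat.cast_id] at hY hnot
        rw [image_succ]
        constructor
        · exact Finset.insert_subset hY hsub
        · rw [Finset.card_insert_of_notMem hnot, hcard]
  obtain ⟨hsub, hcard⟩ := key p le_rfl
  have hSY : (Finset.Icc 1 p).image σ = Y :=
    Finset.eq_of_subset_of_card_le hsub (by rw [hYc, hcard])
  refine ⟨hcard, ?_, by intro i h1 h2; omega⟩
  rw [hSY]
  have hWc : ((Finset.Icc 1 p).image w).card = p := Wcard hw hp
  exact nth_to_cnt (by rw [hYc, hWc]) ((dom_iff (by rw [hYc, hWc])).mp hdom)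

lemma invAll (w σ : ℕ → ℕ) (n p : ℕ) (hp : p ≤ n)
    (hw : Set.BijOn w (Set.Icc 1 n) (Set.Icc 1 n))
    (Y : Finset ℕ) (hYc : Y.card = p)
    (hdom : Dom Y ((Finset.Icc 1 p).image w))
    (hσ1 : ∀ j, 1 ≤ j → j ≤ p →
      ((Y \ ((Finset.Icc 1 (j - 1)).image σ)).filter (fun y => y ≤ w j)).max = (σ j : WithBot ℕ))
    (hσ2 : ∀ j, p < j → j ≤ n → ∃ q, 1 ≤ q ∧ q ≤ j ∧
      (q ≤ j - 1 →
        nth ((Finset.Icc 1 (j - 1)).image σ) q > nth ((Finset.Icc 1 j).image w) q) ∧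
      (∀ r, 1 ≤ r → r < q →
        nth ((Finset.Icc 1 (j - 1)).image σ) r ≤ nth ((Finset.Icc 1 j).image w) r) ∧
      σ j = nth ((Finset.Icc 1 j).image w) q) :
    ∀ k, p ≤ k → k ≤ n → Inv w σ p k := by
  intro k hk1
  induction k, hk1 using Nat.le_induction with
  | base => exact fun _ => base w σ n p hp hw Y hYc hdom hσ1
  | succ m hm ih =>
      intro hmn
      exact (step w σ n p m hw hσ2 hm (by omega) (ih (by omega))).1

end Deo

theorem stmt15 (n p : ℕ) (hp : p ≤ n) (w σ : ℕ → ℕ)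
    (hw : Set.BijOn w (Set.Icc 1 n) (Set.Icc 1 n))
    (Y : Finset ℕ) (hYs : Y ⊆ Finset.Icc 1 n) (hYc : Y.card = p)
    -- Y ≤ {w_1,...,w_p}:
    (hdom : Dom Y ((Finset.Icc 1 p).image w))
    -- for j ≤ p, σ_j is the maximum element of Y \ {σ_1,...,σ_{j-1}} not exceeding w_j:
    (hσ1 : ∀ j, 1 ≤ j → j ≤ p →
      ((Y \ ((Finset.Icc 1 (j - 1)).image σ)).filter (fun y => y ≤ w j)).max = (σ j : WithBot ℕ))
    -- for j > p, σ_j is the output of the subroutine with A = {w_1,...,w_{j-1}},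
    -- B = {σ_1,...,σ_{j-1}}, γ = w_j (so that A ∪ {γ} = {w_1,...,w_j}):
    -- q is least in {1,...,j} with b̃_q > ã'_q (with b̃_j = ∞), and σ_j = ã'_q:
    (hσ2 : ∀ j, p < j → j ≤ n → ∃ q, 1 ≤ q ∧ q ≤ j ∧
      (q ≤ j - 1 →
        nth ((Finset.Icc 1 (j - 1)).image σ) q > nth ((Finset.Icc 1 j).image w) q) ∧
      (∀ r, 1 ≤ r → r < q →
        nth ((Finset.Icc 1 (j - 1)).image σ) r ≤ nth ((Finset.Icc 1 j).image w) r) ∧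
      σ j = nth ((Finset.Icc 1 j).image w) q) :
    ∀ i, p < i → i ≤ n →
      w i ≤ σ i ∧
      Dom ((Finset.Icc 1 i).image σ) ((Finset.Icc 1 i).image w) ∧
      (σ i ∈ (Finset.Icc 1 i).image w ∧
        level (σ i) ((Finset.Icc 1 i).image σ) = level (σ i) ((Finset.Icc 1 i).image w)) ∧
      (∀ j, i ≤ j → j ≤ n → σ i ∈ (Finset.Icc 1 j).image w ∧
        level (σ i) ((Finset.Icc 1 j).image σ) = level (σ i) ((Finset.Icc 1 j).image w)) ∧
      (∀ j, i < j → j ≤ n → w j < σ i → σ j < σ i) := by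
  intro i hpi hin
  have hInv : ∀ k, p ≤ k → k ≤ n → Deo.Inv w σ p k :=
    Deo.invAll w σ n p hp hw Y hYc hdom hσ1 hσ2
  obtain ⟨hSc, hdomc, hmatch⟩ := hInv i (by omega) hin
  obtain ⟨hwi, hiW, hicnt⟩ := hmatch i hpi le_rfl
  have hWc : ((Finset.Icc 1 i).image w).card = i := Deo.Wcard hw hin
  have hiS : σ i ∈ (Finset.Icc 1 i).image σ :=
    Finset.mem_image.mpr ⟨i, Finset.mem_Icc.mpr ⟨by omega, le_rfl⟩, rfl⟩
  refine ⟨hwi, ?_, ⟨hiW, ?_⟩, ?_, ?_⟩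
  · exact (Deo.dom_iff (by omega)).mpr (Deo.cnt_to_nth (by omega) hdomc)
  · rw [Deo.level_eq_cnt hiS, Deo.level_eq_cnt hiW, hicnt]
  · intro j hij hjn
    obtain ⟨hSc', hdomc', hmatch'⟩ := hInv j (by omega) hjn
    obtain ⟨-, hiW', hicnt'⟩ := hmatch' i hpi hij
    have hiS' : σ i ∈ (Finset.Icc 1 j).image σ :=
      Finset.mem_image.mpr ⟨i, Finset.mem_Icc.mpr ⟨by omega, hij⟩, rfl⟩
    exact ⟨hiW', by rw [Deo.level_eq_cnt hiS', Deo.level_eq_cnt hiW', hicnt']⟩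
  · intro j hij hjn hlt
    have h5 := (Deo.step w σ n p (j-1) hw hσ2 (by omega) (by omega)
      (hInv (j-1) (by omega) (by omega))).2
    have hj : j - 1 + 1 = j := by omega
    rw [hj] at h5
    exact h5 i hpi (by omega) hlt
end

section
/- Fix p ≤ n, a p-element subset Y of [n], and w ∈ S_n with {w_1,...,w_p} ≤ Y. Define ξ_1,...,ξ_p recursively by: ξ_j is the least element of Y \ {ξ_1,...,ξ_{j-1}} that is ≥ w_j. Then ξ_j is well-defined for all j (the relevant set is nonempty), and moreover for any i ≤ p and y ∈ Y \ {ξ_1,...,ξ_{i-1}}: (1) ξ_i ≥ w_i; (2) ξ_i > y iff w_i > y; (3) |{k ≤ i : w_k ≤ y}| = |{k ≤ i : ξ_k ≤ y}|. -/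
lemma aux_countP_le {l₁ l₂ : List ℕ} (h : List.Forall₂ (· ≤ ·) l₁ l₂) (t : ℕ) :
    l₂.countP (fun x => decide (x < t)) ≤ l₁.countP (fun x => decide (x < t)) := by
  induction h with
  | nil => simp
  | @cons a b l₁ l₂ hab h ih =>
    simp only [List.countP_cons]
    have : (if decide (b < t) = true then 1 else 0) ≤ (if decide (a < t) = true then 1 else 0) := by
      by_cases hb : b < t
      · have ha : a < t := lt_of_le_of_lt hab hb
        simp [hb, ha]
      · simp [hb]
    omega

lemma aux_card_filter (E : Finset ℕ) (t : ℕ) :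
    (E.filter (fun x => x < t)).card = (Finset.sort E (· ≤ ·)).countP (fun x => decide (x < t)) := by
  rw [((Finset.sort_perm_toList (s := E) (r := (· ≤ ·))).countP_eq _)]
  rw [show E.toList = E.val.toList from rfl]
  rw [← Multiset.coe_countP, Multiset.coe_toList, Finset.card_def, Finset.filter_val,
    Multiset.countP_eq_card_filter]

theorem stmt17 (n p : ℕ) (hp : p ≤ n) (w ξ : ℕ → ℕ)
    (hw : Set.BijOn w (Set.Icc 1 n) (Set.Icc 1 n))
    (Y : Finset ℕ) (hYs : Y ⊆ Finset.Icc 1 n) (hYc : Y.card = p)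
    -- {w_1,...,w_p} ≤ Y:
    (hdom : Dom ((Finset.Icc 1 p).image w) Y) :
    -- ξ_j is well defined: if ξ_1, ..., ξ_{j-1} have been chosen by the rule, then the set
    -- from which ξ_j is to be chosen as the minimum is nonempty:
    (∀ j, 1 ≤ j → j ≤ p →
      (∀ k, 1 ≤ k → k < j →
        ((Y \ ((Finset.Icc 1 (k - 1)).image ξ)).filter (fun y => w k ≤ y)).min = (ξ k : WithTop ℕ)) →
      ((Y \ ((Finset.Icc 1 (j - 1)).image ξ)).filter (fun y => w j ≤ y)).Nonempty) ∧
    -- and if ξ_1, ..., ξ_p are all chosen by the rule, then: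
    ((∀ j, 1 ≤ j → j ≤ p →
        ((Y \ ((Finset.Icc 1 (j - 1)).image ξ)).filter (fun y => w j ≤ y)).min = (ξ j : WithTop ℕ)) →
      ∀ i, 1 ≤ i → i ≤ p → ∀ y ∈ Y \ ((Finset.Icc 1 (i - 1)).image ξ),
        w i ≤ ξ i ∧
        (y < ξ i ↔ y < w i) ∧
        ((((Finset.Icc 1 i).image w).filter (fun x => x ≤ y)).card =
          (((Finset.Icc 1 i).image ξ).filter (fun x => x ≤ y)).card)) := by
  classical
  -- facts extracted from the rule at step j
  have ruleFacts : ∀ j : ℕ,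
      ((Y \ ((Finset.Icc 1 (j - 1)).image ξ)).filter (fun y => w j ≤ y)).min = (ξ j : WithTop ℕ) →
      ξ j ∈ Y \ ((Finset.Icc 1 (j - 1)).image ξ) ∧ w j ≤ ξ j ∧
      ∀ y ∈ Y \ ((Finset.Icc 1 (j - 1)).image ξ), w j ≤ y → ξ j ≤ y := by
    intro j hr
    have hmem := Finset.mem_of_min hr
    rw [Finset.mem_filter] at hmem
    refine ⟨hmem.1, hmem.2, ?_⟩
    intro y hy hwy
    have h := Finset.min_le (Finset.mem_filter.mpr ⟨hy, hwy⟩)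
    rw [hr] at h
    exact WithTop.coe_le_coe.mp h
  -- the counting invariant
  have inv : ∀ m, m ≤ p →
      (∀ k, 1 ≤ k → k ≤ m →
        ((Y \ ((Finset.Icc 1 (k - 1)).image ξ)).filter (fun y => w k ≤ y)).min = (ξ k : WithTop ℕ)) →
      ((Finset.Icc 1 m).image ξ ⊆ Y ∧ ((Finset.Icc 1 m).image ξ).card = m ∧
        ∀ t, ((Y \ (Finset.Icc 1 m).image ξ).filter (fun x => x < t)).card ≤
          ((Finset.Icc (m + 1) p).filter (fun k => w k < t)).card) := by
    intro m
    induction m with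
    | zero =>
      intro _ _
      have he : Finset.Icc 1 0 = (∅ : Finset ℕ) := Finset.Icc_eq_empty (by omega)
      rw [he, Finset.image_empty]
      refine ⟨Finset.empty_subset _, Finset.card_empty, ?_⟩
      intro t
      rw [Finset.sdiff_empty]
      have h1 : (Y.filter (fun x => x < t)).card ≤
          (((Finset.Icc 1 p).image w).filter (fun x => x < t)).card := by
        rw [aux_card_filter, aux_card_filter]
        exact aux_countP_le hdom t
      have h2 : (((Finset.Icc 1 p).image w).filter (fun x => x < t)).card ≤
          ((Finset.Icc (0 + 1) p).filter (fun k => w k < t)).card := by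
        rw [Finset.filter_image]
        exact Finset.card_image_le
      exact le_trans h1 h2
    | succ m ih =>
      intro hm hrules
      obtain ⟨ihsub, ihcard, ihcount⟩ := ih (by omega) (fun k hk1 hk2 => hrules k hk1 (by omega))
      have hr := hrules (m + 1) (by omega) le_rfl
      have hmsimp : m + 1 - 1 = m := rfl
      rw [hmsimp] at hr
      obtain ⟨hmem, hwle, hmin⟩ := ruleFacts (m + 1) (by rw [hmsimp]; exact hr)
      rw [hmsimp] at hmem hmin
      rw [Finset.mem_sdiff] at hmem
      have hXsucc : (Finset.Icc 1 (m + 1)).image ξ =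
          insert (ξ (m + 1)) ((Finset.Icc 1 m).image ξ) := by
        rw [← Finset.insert_Icc_right_eq_Icc_add_one (by omega), Finset.image_insert]
      refine ⟨?_, ?_, ?_⟩
      · rw [hXsucc]
        exact Finset.insert_subset hmem.1 ihsub
      · rw [hXsucc, Finset.card_insert_of_notMem hmem.2, ihcard]
      · intro t
        rw [hXsucc, Finset.sdiff_insert, Finset.filter_erase]
        have hIcc : Finset.Icc (m + 1 + 1) p = (Finset.Icc (m + 1) p).erase (m + 1) := by
          rw [Finset.Icc_erase_left, Finset.Icc_add_one_left_eq_Ioc]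
        rw [hIcc, Finset.filter_erase]
        have ihc := ihcount t
        by_cases htw : w (m + 1) < t
        · by_cases htx : ξ (m + 1) < t
          · -- both present, both erased
            have hL : ξ (m + 1) ∈ (Y \ (Finset.Icc 1 m).image ξ).filter (fun x => x < t) :=
              Finset.mem_filter.mpr ⟨Finset.mem_sdiff.mpr hmem, htx⟩
            have hR : m + 1 ∈ (Finset.Icc (m + 1) p).filter (fun k => w k < t) :=
              Finset.mem_filter.mpr ⟨Finset.mem_Icc.mpr ⟨le_rfl, by omega⟩, htw⟩
            rw [Finset.card_erase_of_mem hL, Finset.card_erase_of_mem hR]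
            omega
          · -- w (m+1) < t ≤ ξ (m+1) : strict inequality needed
            push_neg at htx
            have hL : ξ (m + 1) ∉ (Y \ (Finset.Icc 1 m).image ξ).filter (fun x => x < t) := by
              intro h
              rw [Finset.mem_filter] at h
              omega
            have hR : m + 1 ∈ (Finset.Icc (m + 1) p).filter (fun k => w k < t) :=
              Finset.mem_filter.mpr ⟨Finset.mem_Icc.mpr ⟨le_rfl, by omega⟩, htw⟩
            rw [Finset.erase_eq_of_notMem hL, Finset.card_erase_of_mem hR]
            -- show LHS filter equals filter at threshold w (m+1)
            have hfeq : (Y \ (Finset.Icc 1 m).image ξ).filter (fun x => x < t) =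
                (Y \ (Finset.Icc 1 m).image ξ).filter (fun x => x < w (m + 1)) := by
              apply Finset.filter_congr
              intro y hy
              constructor
              · intro hyt
                by_contra hc
                push_neg at hc
                have := hmin y hy hc
                omega
              · intro hyw
                omega
            have h1 := ihcount (w (m + 1))
            have h2 : insert (m + 1) ((Finset.Icc (m + 1) p).filter (fun k => w k < w (m + 1)))
                ⊆ (Finset.Icc (m + 1) p).filter (fun k => w k < t) := by
              intro k hk
              rw [Finset.mem_insert] at hk
              rcases hk with rfl | hk
              · exact hR
              · rw [Finset.mem_filter] at hk ⊢
                exact ⟨hk.1, by omega⟩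
            have h3 := Finset.card_le_card h2
            rw [Finset.card_insert_of_notMem (by
              intro h
              rw [Finset.mem_filter] at h
              omega)] at h3
            rw [hfeq]
            omega
        · -- t ≤ w (m+1) ≤ ξ (m+1): nothing erased
          push_neg at htw
          have hL : ξ (m + 1) ∉ (Y \ (Finset.Icc 1 m).image ξ).filter (fun x => x < t) := by
            intro h
            rw [Finset.mem_filter] at h
            omega
          have hR : m + 1 ∉ (Finset.Icc (m + 1) p).filter (fun k => w k < t) := by
            intro h
            rw [Finset.mem_filter] at h
            omega
          rw [Finset.erase_eq_of_notMem hL, Finset.erase_eq_of_notMem hR]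
          exact ihc
  constructor
  · -- Part A: nonemptiness
    intro j hj1 hjp hrules
    obtain ⟨hsub, hcard, hcount⟩ := inv (j - 1) (by omega) (fun k hk1 hk2 => hrules k hk1 (by omega))
    by_contra hne
    rw [Finset.not_nonempty_iff_eq_empty] at hne
    have hRcard : (Y \ (Finset.Icc 1 (j - 1)).image ξ).card = p - (j - 1) := by
      rw [Finset.card_sdiff_of_subset hsub, hYc, hcard]
    have hRsub : (Y \ (Finset.Icc 1 (j - 1)).image ξ).filter (fun x => x < w j) =
        Y \ (Finset.Icc 1 (j - 1)).image ξ := by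
      apply Finset.filter_true_of_mem
      intro y hy
      by_contra h
      push_neg at h
      have : y ∈ (Y \ (Finset.Icc 1 (j - 1)).image ξ).filter (fun y => w j ≤ y) :=
        Finset.mem_filter.mpr ⟨hy, h⟩
      rw [hne] at this
      exact absurd this (Finset.notMem_empty y)
    have h1 := hcount (w j)
    have hj : j - 1 + 1 = j := by omega
    rw [hj, hRsub, hRcard] at h1
    have h2 : (Finset.Icc j p).filter (fun k => w k < w j) ⊆ (Finset.Icc j p).erase j := by
      intro k hk
      rw [Finset.mem_filter] at hk
      rw [Finset.mem_erase]
      refine ⟨?_, hk.1⟩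
      intro hkj
      subst hkj
      omega
    have h3 := Finset.card_le_card h2
    rw [Finset.card_erase_of_mem (Finset.mem_Icc.mpr ⟨le_rfl, hjp⟩), Nat.card_Icc] at h3
    omega
  · -- Part B
    intro hrules i hi1 hip y hy
    have hfact : ∀ k, 1 ≤ k → k ≤ i →
        ξ k ∈ Y \ ((Finset.Icc 1 (k - 1)).image ξ) ∧ w k ≤ ξ k ∧
        ∀ y ∈ Y \ ((Finset.Icc 1 (k - 1)).image ξ), w k ≤ y → ξ k ≤ y :=
      fun k hk1 hk2 => ruleFacts k (hrules k hk1 (by omega))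
    obtain ⟨hmem_i, hwle_i, hmin_i⟩ := hfact i hi1 le_rfl
    have h2 : ∀ k, 1 ≤ k → k ≤ i → (ξ k ≤ y ↔ w k ≤ y) := by
      intro k hk1 hk2
      obtain ⟨hmemk, hwlek, hmink⟩ := hfact k hk1 hk2
      constructor
      · intro h
        exact le_trans hwlek h
      · intro h
        apply hmink y ?_ h
        have hsub : (Finset.Icc 1 (k - 1)).image ξ ⊆ (Finset.Icc 1 (i - 1)).image ξ :=
          Finset.image_subset_image (Finset.Icc_subset_Icc_right (by omega))
        rw [Finset.mem_sdiff] at hy ⊢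
        exact ⟨hy.1, fun h' => hy.2 (hsub h')⟩
    refine ⟨hwle_i, ?_, ?_⟩
    · constructor
      · intro hlt
        by_contra h
        push_neg at h
        have := (h2 i hi1 le_rfl).mpr h
        omega
      · intro hlt
        omega
    · rw [Finset.filter_image, Finset.filter_image]
      have hwinj : Set.InjOn w ((Finset.Icc 1 i).filter (fun a => w a ≤ y) : Finset ℕ) := by
        apply hw.injOn.mono
        intro k hk
        simp only [Finset.coe_filter, Set.mem_setOf_eq, Finset.mem_Icc] at hk
        exact Set.mem_Icc.mpr ⟨hk.1.1, by omega⟩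
      have hξkey : ∀ k l, 1 ≤ k → k < l → l ≤ i → ξ k ≠ ξ l := by
        intro k l hk hkl hli heq
        obtain ⟨hmeml, _, _⟩ := hfact l (by omega) hli
        rw [Finset.mem_sdiff] at hmeml
        apply hmeml.2
        exact Finset.mem_image.mpr ⟨k, Finset.mem_Icc.mpr ⟨hk, by omega⟩, heq⟩
      have hξinj : Set.InjOn ξ ((Finset.Icc 1 i).filter (fun a => ξ a ≤ y) : Finset ℕ) := by
        intro k hk l hl heq
        simp only [Finset.coe_filter, Set.mem_setOf_eq, Finset.mem_Icc] at hk hl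
        rcases lt_trichotomy k l with h | h | h
        · exact absurd heq (hξkey k l hk.1.1 h hl.1.2)
        · exact h
        · exact absurd heq.symm (hξkey l k hl.1.1 h hk.1.2)
      rw [Finset.card_image_of_injOn hwinj, Finset.card_image_of_injOn hξinj]
      congr 1
      apply Finset.filter_congr
      intro k hk
      rw [Finset.mem_Icc] at hk
      exact (h2 k hk.1 hk.2).symm
end
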